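/- arXiv:1807.06120 — 5 statements merged into one kernel-verified Lean document; each statement's English description precedes it below -/
import Mathlib

section
/- Let n ≥ 1, 0 ≤ k ≤ n, and let Λⁿ_k be the poset of all nonempty proper subsets of {0,…,n} other than {0,…,n}∖{k}, ordered by inclusion. Let M be a model category and let F be a contravariant functor from Λⁿ_k to M which is a fibrant diagram (every matching map F(α) → M_α(F) is a fibration) and which sends every inclusion to a weak equivalence. Then for every α′ ∈ Λⁿ_k the canonical projection p_{α′} : lim_{α ∈ Λⁿ_k} F(α) → F(α′) is a weak equivalence. -/
open CategoryTheory Limits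

universe v u

/-- `f` is a retract of `g` in the arrow category. -/
def IsRetractOf {C : Type u} [Category.{v} C] {X Y X' Y' : C}
    (f : X ⟶ Y) (g : X' ⟶ Y') : Prop :=
  ∃ (i : X ⟶ X') (r : X' ⟶ X) (j : Y ⟶ Y') (s : Y' ⟶ Y),
    i ≫ r = 𝟙 X ∧ j ≫ s = 𝟙 Y ∧ f ≫ j = i ≫ g ∧ r ≫ f = g ≫ s

/-- A (Quillen) model structure on a category `C`: three classes of morphisms (weak
equivalences, fibrations, cofibrations) satisfying two-out-of-three, closure under
retracts, lifting, and factorization. -/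
structure ModelStructure (C : Type u) [Category.{v} C] where
  W : MorphismProperty C
  Fib : MorphismProperty C
  Cof : MorphismProperty C
  w_id : ∀ X : C, W (𝟙 X)
  fib_id : ∀ X : C, Fib (𝟙 X)
  cof_id : ∀ X : C, Cof (𝟙 X)
  w_comp : ∀ {X Y Z : C} (f : X ⟶ Y) (g : Y ⟶ Z), W f → W g → W (f ≫ g)
  w_cancel_left : ∀ {X Y Z : C} (f : X ⟶ Y) (g : Y ⟶ Z), W f → W (f ≫ g) → W g
  w_cancel_right : ∀ {X Y Z : C} (f : X ⟶ Y) (g : Y ⟶ Z), W g → W (f ≫ g) → W f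
  w_retract : ∀ {X Y X' Y' : C} (f : X ⟶ Y) (g : X' ⟶ Y'), IsRetractOf f g → W g → W f
  fib_retract : ∀ {X Y X' Y' : C} (f : X ⟶ Y) (g : X' ⟶ Y'), IsRetractOf f g → Fib g → Fib f
  cof_retract : ∀ {X Y X' Y' : C} (f : X ⟶ Y) (g : X' ⟶ Y'), IsRetractOf f g → Cof g → Cof f
  lift_trivCof_fib : ∀ {A B X Y : C} (i : A ⟶ B) (p : X ⟶ Y),
    Cof i → W i → Fib p → HasLiftingProperty i p
  lift_cof_trivFib : ∀ {A B X Y : C} (i : A ⟶ B) (p : X ⟶ Y),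
    Cof i → Fib p → W p → HasLiftingProperty i p
  factor_cof_trivFib : ∀ {X Y : C} (f : X ⟶ Y),
    ∃ (Z : C) (i : X ⟶ Z) (p : Z ⟶ Y), Cof i ∧ Fib p ∧ W p ∧ i ≫ p = f
  factor_trivCof_fib : ∀ {X Y : C} (f : X ⟶ Y),
    ∃ (Z : C) (i : X ⟶ Z) (p : Z ⟶ Y), Cof i ∧ W i ∧ Fib p ∧ i ≫ p = f

variable {C : Type u} [Category.{v} C]

/-- An object is fibrant if the map to the terminal object is a fibration. -/
def ModelStructure.Fibrant [HasTerminal C] (MS : ModelStructure C) (X : C) : Prop :=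
  MS.Fib (terminal.from X)

/-- An object is cofibrant if the map from the initial object is a cofibration. -/
def ModelStructure.Cofibrant [HasInitial C] (MS : ModelStructure C) (X : C) : Prop :=
  MS.Cof (initial.to X)

/-- A cylinder object for `X`: a factorization of the fold map `X ⊔ X → X` as a
cofibration followed by a weak equivalence. -/
structure CylObj [HasBinaryCoproducts C] (MS : ModelStructure C) (X : C) where
  I : C
  i₀ : X ⟶ I
  i₁ : X ⟶ I
  π : I ⟶ X
  cof : MS.Cof (coprod.desc i₀ i₁)
  we : MS.W π
  h₀ : i₀ ≫ π = 𝟙 X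
  h₁ : i₁ ≫ π = 𝟙 X

/-- Left homotopy of maps, via some cylinder object. -/
def LeftHomotopic [HasBinaryCoproducts C] (MS : ModelStructure C) {X Y : C}
    (f g : X ⟶ Y) : Prop :=
  ∃ (cyl : CylObj MS X) (H : cyl.I ⟶ Y), cyl.i₀ ≫ H = f ∧ cyl.i₁ ≫ H = g

open Opposite

universe w

section Matching

variable {J : Type w} [PartialOrder J]

/-- The poset of elements strictly below `σ`. -/
abbrev Below (σ : J) : Type w := {τ : J // τ < σ}

/-- The inclusion of `Below σ` into `J`, as a functor of posets. -/
def belowFunctor (σ : J) : Below σ ⥤ J :=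
  Monotone.functor (f := fun τ => τ.1) fun _ _ h => h

variable {M : Type u} [Category.{v} M] [HasLimitsOfSize.{w, w} M]

/-- The restriction of a contravariant functor `F` to the elements strictly below `σ`. -/
def matchingDiagram (F : Jᵒᵖ ⥤ M) (σ : J) : (Below σ)ᵒᵖ ⥤ M :=
  (belowFunctor σ).op ⋙ F

/-- The matching object of `F` at `σ`: the limit of `F` over the nonempty proper
subsets of `σ`. -/
noncomputable def matchingObj (F : Jᵒᵖ ⥤ M) (σ : J) : M :=
  limit (matchingDiagram F σ)

/-- The canonical cone on the matching diagram with apex `F(σ)`. -/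
def matchingCone (F : Jᵒᵖ ⥤ M) (σ : J) : Cone (matchingDiagram F σ) where
  pt := F.obj (op σ)
  π :=
    { app := fun τ => F.map (homOfLE (le_of_lt τ.unop.2)).op
      naturality := by
        intro τ τ' g
        dsimp [matchingDiagram, belowFunctor, Monotone.functor]
        rw [Category.id_comp, ← F.map_comp, ← op_comp]
        congr 1 }

/-- The matching map `F(σ) → M_σ(F)` of `F` at `σ`. -/
noncomputable def matchingMap (F : Jᵒᵖ ⥤ M) (σ : J) : F.obj (op σ) ⟶ matchingObj F σ :=
  limit.lift _ (matchingCone F σ)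

end Matching

/-- The poset `Λⁿ_k` of nonempty proper subsets of `{0, …, n}` other than
`{0, …, n} ∖ {k}`, ordered by inclusion. -/
abbrev Horn (n : ℕ) (k : Fin (n + 1)) : Type :=
  {S : Finset (Fin (n + 1)) //
    S.Nonempty ∧ S ≠ Finset.univ ∧ S ≠ Finset.univ.erase k}


section Closure
variable {C : Type u} [Category.{v} C] (MS : ModelStructure C)

lemma MS_w_of_iso {X Y : C} (f : X ⟶ Y) [IsIso f] : MS.W f := by
  apply MS.w_retract f (𝟙 X) _ (MS.w_id X)
  exact ⟨𝟙 X, 𝟙 X, inv f, f, by simp, by simp, by simp, by simp⟩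

lemma MS_fib_of_iso {X Y : C} (f : X ⟶ Y) [IsIso f] : MS.Fib f := by
  apply MS.fib_retract f (𝟙 X) _ (MS.fib_id X)
  exact ⟨𝟙 X, 𝟙 X, inv f, f, by simp, by simp, by simp, by simp⟩

/-- retract criterion from RLP -/
lemma MS_fib_of_rlp {X Y : C} (p : X ⟶ Y)
    (h : ∀ {A B : C} (i : A ⟶ B), MS.Cof i → MS.W i → HasLiftingProperty i p) :
    MS.Fib p := by
  obtain ⟨Z, i, q, hiC, hiW, hq, hcomp⟩ := MS.factor_trivCof_fib p
  have := h i hiC hiW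
  have sq : CommSq (𝟙 X) i p q := ⟨by simpa using hcomp.symm⟩
  apply MS.fib_retract p q _ hq
  exact ⟨i, sq.lift, 𝟙 Y, 𝟙 Y, sq.fac_left, by simp, by simpa using hcomp.symm,
    by simp [sq.fac_right]⟩

lemma MS_trivFib_of_rlp {X Y : C} (p : X ⟶ Y)
    (h : ∀ {A B : C} (i : A ⟶ B), MS.Cof i → HasLiftingProperty i p) :
    MS.Fib p ∧ MS.W p := by
  obtain ⟨Z, i, q, hiC, hq, hqW, hcomp⟩ := MS.factor_cof_trivFib p
  have := h i hiC
  have sq : CommSq (𝟙 X) i p q := ⟨by simpa using hcomp.symm⟩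
  have hr : IsRetractOf p q :=
    ⟨i, sq.lift, 𝟙 Y, 𝟙 Y, sq.fac_left, by simp, by simpa using hcomp.symm,
      by simp [sq.fac_right]⟩
  exact ⟨MS.fib_retract p q hr hq, MS.w_retract p q hr hqW⟩

lemma MS_fib_comp {X Y Z : C} (p : X ⟶ Y) (q : Y ⟶ Z) (hp : MS.Fib p) (hq : MS.Fib q) :
    MS.Fib (p ≫ q) := by
  apply MS_fib_of_rlp
  intro A B i hic hiw
  have := MS.lift_trivCof_fib i p hic hiw hp
  have := MS.lift_trivCof_fib i q hic hiw hq
  infer_instance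

lemma MS_trivFib_comp {X Y Z : C} (p : X ⟶ Y) (q : Y ⟶ Z) (hp : MS.Fib p ∧ MS.W p)
    (hq : MS.Fib q ∧ MS.W q) : MS.Fib (p ≫ q) ∧ MS.W (p ≫ q) :=
  ⟨MS_fib_comp MS p q hp.1 hq.1, MS.w_comp p q hp.2 hq.2⟩

lemma hasLifting_of_isPullback {A B P X Y Z : C} {i : A ⟶ B}
    {fst : P ⟶ X} {snd : P ⟶ Y} {f : X ⟶ Z} {g : Y ⟶ Z}
    (hpb : IsPullback fst snd f g) (hf : HasLiftingProperty i f) :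
    HasLiftingProperty i snd := by
  constructor
  intro u v sq
  have sq2 : CommSq (u ≫ fst) i f (v ≫ g) :=
    ⟨by rw [← Category.assoc, ← sq.w, Category.assoc, Category.assoc, hpb.w]⟩
  exact ⟨⟨⟨hpb.lift sq2.lift v sq2.fac_right, by
      apply hpb.hom_ext <;> simp [sq2.fac_left, ← sq.w], by simp⟩⟩⟩

lemma MS_fib_of_isPullback {P X Y Z : C} {fst : P ⟶ X} {snd : P ⟶ Y} {f : X ⟶ Z} {g : Y ⟶ Z}
    (hpb : IsPullback fst snd f g) (hf : MS.Fib f) : MS.Fib snd := by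
  apply MS_fib_of_rlp
  intro A B i hic hiw
  exact hasLifting_of_isPullback hpb (MS.lift_trivCof_fib i f hic hiw hf)

lemma MS_trivFib_of_isPullback {P X Y Z : C} {fst : P ⟶ X} {snd : P ⟶ Y} {f : X ⟶ Z}
    {g : Y ⟶ Z} (hpb : IsPullback fst snd f g) (hf : MS.Fib f ∧ MS.W f) :
    MS.Fib snd ∧ MS.W snd := by
  apply MS_trivFib_of_rlp
  intro A B i hic
  exact hasLifting_of_isPullback hpb (MS.lift_cof_trivFib i f hic hf.1 hf.2)

end Closure


section Matching2
variable {J : Type w} [PartialOrder J]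
variable {M : Type u} [Category.{v} M] [HasLimitsOfSize.{w, w} M]
variable (F : Jᵒᵖ ⥤ M)

variable (F : Jᵒᵖ ⥤ M)

def subF (S : Set J) : ↥S ⥤ J := Monotone.functor (f := fun τ => τ.1) fun _ _ h => h

def FS (S : Set J) : (↥S)ᵒᵖ ⥤ M := (subF S).op ⋙ F

noncomputable def LS (S : Set J) : M := limit (FS F S)

noncomputable def piS {S : Set J} {β : J} (h : β ∈ S) : LS F S ⟶ F.obj (op β) :=
  limit.π (FS F S) (op ⟨β, h⟩)

example (σ : J) : matchingDiagram F σ = FS F {τ | τ < σ} := rfl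

lemma F_w {a b c : J} (h1 : a ≤ b) (h2 : b ≤ c) :
    F.map (homOfLE h2).op ≫ F.map (homOfLE h1).op = F.map (homOfLE (h1.trans h2)).op := by
  rw [← F.map_comp, ← op_comp, homOfLE_comp]

lemma piS_w {S : Set J} {β β' : J} (h : β ∈ S) (h' : β' ∈ S) (hle : β ≤ β') :
    piS F h' ≫ F.map (homOfLE hle).op = piS F h := by
  have := limit.w (FS F S) ((homOfLE (show (⟨β, h⟩ : ↥S) ≤ ⟨β', h'⟩ from hle)).op)
  exact this

noncomputable def mkHom {S : Set J} {X : M} (f : ∀ β, β ∈ S → (X ⟶ F.obj (op β)))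
    (hf : ∀ β (hβ : β ∈ S) β' (hβ' : β' ∈ S) (hle : β ≤ β'),
      f β' hβ' ≫ F.map (homOfLE hle).op = f β hβ) : X ⟶ LS F S :=
  limit.lift (FS F S)
    { pt := X
      π :=
        { app := fun b => f b.unop.1 b.unop.2
          naturality := by
            intro a b g
            have hle : (b.unop : J) ≤ (a.unop : J) := leOfHom g.unop
            have := hf b.unop.1 b.unop.2 a.unop.1 a.unop.2 hle
            simp only [Functor.const_obj_map, Category.id_comp]
            have he : (FS F S).map g = F.map (homOfLE hle).op := rfl
            rw [he]
            exact (Category.id_comp _).trans this.symm } }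

@[simp] lemma mkHom_pi {S : Set J} {X : M} (f : ∀ β, β ∈ S → (X ⟶ F.obj (op β)))
    (hf) {β : J} (h : β ∈ S) : mkHom F f hf ≫ piS F h = f β h :=
  limit.lift_π _ _

lemma LS_hom_ext {S : Set J} {X : M} {a b : X ⟶ LS F S}
    (h : ∀ β (hβ : β ∈ S), a ≫ piS F hβ = b ≫ piS F hβ) : a = b := by
  apply limit.hom_ext
  intro j
  exact h j.unop.1 j.unop.2

noncomputable def restrictL {S S' : Set J} (h : S ⊆ S') : LS F S' ⟶ LS F S :=
  mkHom F (fun β hβ => piS F (h hβ)) (fun β hβ β' hβ' hle => piS_w F _ _ hle)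

@[simp] lemma restrictL_pi {S S' : Set J} (h : S ⊆ S') {β : J} (hβ : β ∈ S) :
    restrictL F h ≫ piS F hβ = piS F (h hβ) := by simp [restrictL]

noncomputable def coneMapL (σ : J) (S : Set J) (hS : ∀ β ∈ S, β ≤ σ) :
    F.obj (op σ) ⟶ LS F S :=
  mkHom F (fun β hβ => F.map (homOfLE (hS β hβ)).op)
    (fun β hβ β' hβ' hle => F_w F _ _)

@[simp] lemma coneMapL_pi (σ : J) (S : Set J) (hS) {β : J} (hβ : β ∈ S) :
    coneMapL F σ S hS ≫ piS F hβ = F.map (homOfLE (hS β hβ)).op := by simp [coneMapL]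

-- identify matching map with coneMapL on BelowSet
lemma coneMapL_below_eq (σ : J) :
    matchingMap F σ = (coneMapL F σ {τ | τ < σ} (fun β hβ => le_of_lt hβ) :
      F.obj (op σ) ⟶ LS F {τ | τ < σ}) := by
  apply LS_hom_ext (F := F) (S := {τ | τ < σ})
  intro β hβ
  rw [coneMapL_pi]
  exact limit.lift_π _ _

noncomputable def resL (S : Set J) : limit F ⟶ LS F S :=
  mkHom F (fun β hβ => limit.π F (op β))
    (fun β hβ β' hβ' hle => limit.w F (homOfLE hle).op)

@[simp] lemma resL_pi (S : Set J) {β : J} (hβ : β ∈ S) :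
    resL F S ≫ piS F hβ = limit.π F (op β) := by simp [resL]


section ATT

lemma isPullback_ATT {S S' : Set J} (hSS' : S ⊆ S') {σ : J} (hσS' : σ ∈ S') (hσ : σ ∉ S)
    (hup : ∀ β ∈ S', β ∉ S → β ≤ σ)
    (hmax : ∀ β ∈ S', β ∉ S → ∀ β' ∈ S, ¬ β ≤ β') :
    IsPullback (piS F hσS') (restrictL F hSS')
      (coneMapL F σ {β | β ∈ S ∧ β ≤ σ} (fun β hβ => hβ.2))
      (restrictL F (Set.sep_subset _ _)) := by
  classical
  have comm : piS F hσS' ≫ coneMapL F σ {β | β ∈ S ∧ β ≤ σ} (fun β hβ => hβ.2) =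
      restrictL F hSS' ≫ restrictL F (Set.sep_subset _ _) := by
    apply LS_hom_ext
    intro β hβ
    rw [Category.assoc, Category.assoc, coneMapL_pi, restrictL_pi, restrictL_pi]
    exact piS_w F _ _ _
  apply IsPullback.of_isLimit' ⟨comm⟩
  apply PullbackCone.IsLimit.mk
  case lift =>
    intro s
    refine mkHom F (fun β hβ => if hbs : β ∈ S then s.snd ≫ piS F hbs
      else s.fst ≫ F.map (homOfLE (hup β hβ hbs)).op) ?_
    intro β hβ β' hβ' hle
    by_cases hbs : β ∈ S
    · rw [dif_pos hbs]
      by_cases hbs' : β' ∈ S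
      · rw [dif_pos hbs', Category.assoc, piS_w F hbs hbs' hle]
      · rw [dif_neg hbs', Category.assoc, F_w]
        have hD : β ∈ {β | β ∈ S ∧ β ≤ σ} := ⟨hbs, hle.trans (hup β' hβ' hbs')⟩
        have := congrArg (· ≫ piS F hD) s.condition
        simpa [Category.assoc] using this
    · rw [dif_neg hbs]
      by_cases hbs' : β' ∈ S
      · exact absurd hle (hmax β hβ hbs β' hbs')
      · rw [dif_neg hbs', Category.assoc, F_w]
  case fac_left =>
    intro s
    rw [mkHom_pi, dif_neg hσ]
    have : F.map (homOfLE (hup σ hσS' hσ)).op = 𝟙 _ := by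
      rw [show homOfLE (hup σ hσS' hσ) = 𝟙 σ from Subsingleton.elim _ _]
      simp
    rw [this, Category.comp_id]
  case fac_right =>
    intro s
    apply LS_hom_ext
    intro β hβ
    rw [Category.assoc, restrictL_pi, mkHom_pi, dif_pos hβ]
  case uniq =>
    intro s m hm1 hm2
    apply LS_hom_ext
    intro β hβ
    rw [mkHom_pi]
    by_cases hbs : β ∈ S
    · rw [dif_pos hbs]
      have := congrArg (· ≫ piS F hbs) hm2
      simpa [Category.assoc] using this
    · rw [dif_neg hbs, ← hm1, Category.assoc]
      congr 1
      exact (piS_w F _ _ _).symm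


end ATT

lemma restrictL_comp {S1 S2 S3 : Set J} (h12 : S1 ⊆ S2) (h23 : S2 ⊆ S3) :
    restrictL F h23 ≫ restrictL F h12 = restrictL F (h12.trans h23) := by
  apply LS_hom_ext
  intro β hβ
  simp

lemma restrictL_self {S : Set J} (h : S ⊆ S) : restrictL F h = 𝟙 (LS F S) := by
  apply LS_hom_ext
  intro β hβ
  simp

lemma isIso_restrictL_of_eq {S S' : Set J} (h : S ⊆ S') (h' : S' ⊆ S) :
    IsIso (restrictL F h) := by
  refine ⟨restrictL F h', ?_, ?_⟩
  · rw [restrictL_comp, restrictL_self]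
  · rw [restrictL_comp, restrictL_self]

lemma isIso_piS_of_singleton {S : Set J} {b : J} (hb : b ∈ S) (hall : ∀ x ∈ S, x = b) :
    IsIso (piS F hb) := by
  refine ⟨mkHom F (fun β hβ => F.map (homOfLE (le_of_eq (hall β hβ))).op)
    (fun β hβ β' hβ' hle => F_w F _ _), ?_, ?_⟩
  · apply LS_hom_ext
    intro β hβ
    rw [Category.assoc, mkHom_pi, Category.id_comp]
    exact piS_w F _ _ _
  · rw [mkHom_pi]
    have : homOfLE (le_of_eq (hall b hb)) = 𝟙 b := Subsingleton.elim _ _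
    rw [this]
    simp

lemma resL_isIso_of_univ (S : Set J) (hall : ∀ x : J, x ∈ S) : IsIso (resL F S) := by
  refine ⟨limit.lift F
    { pt := LS F S
      π :=
        { app := fun j => piS F (hall j.unop)
          naturality := by
            intro a b g
            have hle : (b.unop : J) ≤ (a.unop : J) := leOfHom g.unop
            have he : F.map g = F.map (homOfLE hle).op :=
              congrArg F.map (Subsingleton.elim _ _)
            dsimp only [Functor.const_obj_map]
            rw [he]
            simpa using (piS_w F (hall b.unop) (hall a.unop) hle).symm } }, ?_, ?_⟩
  · apply limit.hom_ext
    intro j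
    rw [Category.assoc, limit.lift_π, Category.id_comp]
    exact resL_pi F S (hall j.unop)
  · apply LS_hom_ext
    intro β hβ
    rw [Category.assoc, resL_pi, Category.id_comp]
    exact limit.lift_π _ _


lemma fib_coneMapL_of_below (MS : ModelStructure M) (σ : J) (D : Set J)
    (hDeq : D = {τ | τ < σ}) (hD : ∀ β ∈ D, β ≤ σ)
    (h : MS.Fib (matchingMap F σ)) : MS.Fib (coneMapL F σ D hD) := by
  subst hDeq
  rw [coneMapL_below_eq F σ] at h
  exact h

end Matching2

namespace HornAux
variable {n : ℕ} {k : Fin (n + 1)}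

lemma between_erase {T s : Finset (Fin (n + 1))} (hk : k ∈ T) (h1 : T.erase k ⊆ s)
    (h2 : s ⊆ T) : s = T.erase k ∨ s = T := by
  by_cases hks : k ∈ s
  · right
    refine subset_antisymm h2 (fun j hj => ?_)
    by_cases hjk : j = k
    · subst hjk; exact hks
    · exact h1 (Finset.mem_erase.mpr ⟨hjk, hj⟩)
  · left
    refine subset_antisymm (fun j hj => ?_) h1
    exact Finset.mem_erase.mpr ⟨fun h => hks (h ▸ hj), h2 hj⟩

lemma horn_cond (x : Horn n k) {s : Finset (Fin (n + 1))} (hs : s ⊆ x.1) :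
    s ≠ Finset.univ ∧ s ≠ Finset.univ.erase k := by
  constructor
  · intro h
    exact x.2.2.1 (subset_antisymm (Finset.subset_univ _) (h ▸ hs))
  · intro h
    rcases between_erase (Finset.mem_univ k) (h ▸ hs) (Finset.subset_univ _) with h' | h'
    · exact x.2.2.2 h'
    · exact x.2.2.1 h'

def bElt (n : ℕ) (k : Fin (n + 1)) (hn : 1 ≤ n) : Horn n k :=
  ⟨{k}, Finset.singleton_nonempty k, by
    intro h
    have := Finset.card_univ (α := Fin (n + 1))
    rw [← h, Finset.card_singleton] at this
    simp at this; omega, by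
    intro h
    exact Finset.notMem_erase k Finset.univ (h ▸ Finset.mem_singleton_self k)⟩

def HornSet (T : Finset (Fin (n + 1))) : Set (Horn n k) :=
  {β | β.1 ⊂ T ∧ β.1 ≠ T.erase k}

lemma hornSet_down {T : Finset (Fin (n + 1))} (hk : k ∈ T) {x y : Horn n k}
    (hx : x ∈ HornSet T) (h : y ≤ x) : y ∈ HornSet T := by
  refine ⟨lt_of_le_of_lt (show y.1 ≤ x.1 from h) hx.1, ?_⟩
  intro he
  rcases between_erase hk (he ▸ (h : y.1 ⊆ x.1)) hx.1.subset with h' | h'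
  · exact hx.2 h'
  · exact hx.1.ne h'

lemma bElt_mem_hornSet {T : Finset (Fin (n + 1))} (hk : k ∈ T) (h2 : 2 ≤ T.card)
    (hn : 1 ≤ n) : bElt n k hn ∈ HornSet T := by
  constructor
  · rw [Finset.ssubset_iff_subset_ne]
    refine ⟨Finset.singleton_subset_iff.mpr hk, fun h => ?_⟩
    have := congrArg Finset.card h
    simp [bElt] at this
    omega
  · intro h
    exact Finset.notMem_erase k T (h ▸ Finset.mem_singleton_self k)

lemma insert_k_horn (x : Horn n k) : insert k x.1 ≠ Finset.univ ∧
    insert k x.1 ≠ Finset.univ.erase k := by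
  refine ⟨?_, fun h => ?_⟩
  case refine_2 =>
    have := Finset.mem_insert_self k x.1
    rw [h] at this
    exact Finset.notMem_erase k _ this
  intro h
  have hsub : Finset.univ.erase k ⊆ x.1 := by
    intro j hj
    have hj' := Finset.mem_erase.mp hj
    have : j ∈ insert k x.1 := by rw [h]; exact Finset.mem_univ j
    rcases Finset.mem_insert.mp this with h' | h'
    · exact absurd h' hj'.1
    · exact h'
  rcases between_erase (Finset.mem_univ k) hsub (Finset.subset_univ _) with h' | h'
  · exact x.2.2.2 h'
  · exact x.2.2.1 h'

lemma mem_hornSet_univ (x : Horn n k) : x ∈ HornSet (Finset.univ : Finset (Fin (n + 1))) := by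
  refine ⟨Finset.ssubset_iff_subset_ne.mpr ⟨Finset.subset_univ _, x.2.2.1⟩, x.2.2.2⟩

/-- the invariant for the collapsing induction -/
structure GoodS (hn : 1 ≤ n) (T : Finset (Fin (n + 1))) (S : Finset (Horn n k)) : Prop where
  hb : bElt n k hn ∈ S
  hsub : ∀ x ∈ S, x ∈ HornSet T
  hdown : ∀ x ∈ S, ∀ y : Horn n k, y ≤ x → y ∈ S
  hkcl : ∀ x ∈ S, ∀ y : Horn n k, y.1 = insert k x.1 → y ∈ S

lemma goodS_singleton (hn : 1 ≤ n) {T : Finset (Fin (n + 1))} (hk : k ∈ T)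
    (h2 : 2 ≤ T.card) : GoodS hn T ({bElt n k hn} : Finset (Horn n k)) := by
  constructor
  · exact Finset.mem_singleton_self _
  · intro x hx
    rw [Finset.mem_singleton] at hx
    subst hx
    exact bElt_mem_hornSet hk h2 hn
  · intro x hx y hy
    rw [Finset.mem_singleton] at hx
    subst hx
    rw [Finset.mem_singleton]
    apply Subtype.ext
    have hsub : y.1 ⊆ {k} := hy
    have hyk : y.1 = {k} := by
      rcases y.2.1 with ⟨j, hj⟩
      have hjk := Finset.mem_singleton.mp (hsub hj)
      subst hjk
      exact subset_antisymm hsub (Finset.singleton_subset_iff.mpr hj)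
    simpa [bElt] using hyk
  · intro x hx y hy
    rw [Finset.mem_singleton] at hx
    subst hx
    rw [Finset.mem_singleton]
    apply Subtype.ext
    rw [hy]
    simp [bElt]

lemma step_exists (hn : 1 ≤ n) {T : Finset (Fin (n + 1))} (hk : k ∈ T) (h2 : 2 ≤ T.card)
    {S : Finset (Horn n k)} (hG : GoodS hn T S)
    (hnc : ¬ ∀ x : Horn n k, x ∈ HornSet T → x ∈ S) :
    ∃ (σ γ : Horn n k),
      σ ∈ HornSet T ∧ σ ∉ S ∧ γ ∉ S ∧ γ < σ ∧ k ∈ σ.1 ∧ 2 ≤ σ.1.card ∧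
      (∀ β : Horn n k, (β ∈ S ∧ β ≤ σ) ↔ β ∈ HornSet σ.1) ∧
      GoodS hn T (insert σ (insert γ S)) := by
  classical
  push_neg at hnc
  obtain ⟨γ0, hγ0H, hγ0S⟩ := hnc
  have hex : ∃ m, ∃ γ' : Horn n k, (γ' ∈ HornSet T ∧ γ' ∉ S) ∧ γ'.1.card = m :=
    ⟨γ0.1.card, γ0, ⟨hγ0H, hγ0S⟩, rfl⟩
  obtain ⟨γ, ⟨hγH, hγS⟩, hγcard⟩ := Nat.find_spec hex
  set m := Nat.find hex with hm
  have hmin : ∀ δ : Horn n k, δ ∈ HornSet T → δ ∉ S → m ≤ δ.1.card := by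
    intro δ h1 h2'
    by_contra hlt
    exact Nat.find_min hex (show δ.1.card < m by omega) ⟨δ, ⟨h1, h2'⟩, rfl⟩
  -- no minimal-cardinality element of the complement contains k
  have hknotin : ∀ δ : Horn n k, δ ∈ HornSet T → δ ∉ S → δ.1.card ≤ m → k ∉ δ.1 := by
    intro δ hδH hδS hδc hkδ
    have hne : (δ.1.erase k).Nonempty := by
      by_contra hemp
      rw [Finset.not_nonempty_iff_eq_empty] at hemp
      have hsub1 : δ.1 ⊆ {k} := by
        intro j hj
        rw [Finset.mem_singleton]
        by_contra hjk
        have : j ∈ δ.1.erase k := Finset.mem_erase.mpr ⟨hjk, hj⟩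
        rw [hemp] at this
        simp at this
      have hδb : δ = bElt n k hn := by
        apply Subtype.ext
        exact subset_antisymm hsub1 (Finset.singleton_subset_iff.mpr hkδ)
      exact hδS (hδb ▸ hG.hb)
    have hsubδ : δ.1.erase k ⊆ δ.1 := Finset.erase_subset _ _
    have hcond := horn_cond δ hsubδ
    set τ0 : Horn n k := ⟨δ.1.erase k, hne, hcond.1, hcond.2⟩ with hτ0
    have hτ0H : τ0 ∈ HornSet T := by
      constructor
      · exact lt_of_le_of_lt hsubδ hδH.1
      · intro h
        have hc := congrArg Finset.card h
        rw [Finset.card_erase_of_mem hkδ, Finset.card_erase_of_mem hk] at hc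
        have h3 := Finset.card_lt_card hδH.1
        have h4 := Finset.card_pos.mpr δ.2.1
        omega
    have hτ0S : τ0 ∉ S := by
      intro h
      apply hδS
      exact hG.hkcl τ0 h δ (Finset.insert_erase hkδ).symm
    have := hmin τ0 hτ0H hτ0S
    have hc : τ0.1.card = δ.1.card - 1 := Finset.card_erase_of_mem hkδ
    have h4 := Finset.card_pos.mpr δ.2.1
    omega
  have hkγ : k ∉ γ.1 := hknotin γ hγH hγS (le_of_eq hγcard)
  have hins := insert_k_horn γ
  set σ : Horn n k := ⟨insert k γ.1, Finset.insert_nonempty _ _, hins.1, hins.2⟩ with hσdef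
  have hγσ : γ < σ := Finset.ssubset_insert hkγ
  have hσH : σ ∈ HornSet T := by
    refine ⟨Finset.ssubset_iff_subset_ne.mpr ⟨Finset.insert_subset hk hγH.1.subset, ?_⟩, ?_⟩
    · intro h
      have h' : insert k γ.1 = T := h
      have hsub : T.erase k ⊆ γ.1 := by
        intro j hj
        obtain ⟨hjk, hjT⟩ := Finset.mem_erase.mp hj
        have : j ∈ insert k γ.1 := by rw [h']; exact hjT
        rcases Finset.mem_insert.mp this with h' | h'
        · exact absurd h' hjk
        · exact h'
      rcases between_erase hk hsub hγH.1.subset with h' | h'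
      · exact hγH.2 h'
      · exact hγH.1.ne h'
    · intro h
      have h' : insert k γ.1 = T.erase k := h
      have := Finset.mem_insert_self k γ.1
      rw [h'] at this
      exact Finset.notMem_erase k T this
  have hσS : σ ∉ S := fun h => hγS (hG.hdown σ h γ (le_of_lt hγσ))
  have hkσ : k ∈ σ.1 := Finset.mem_insert_self k γ.1
  have hγpos := Finset.card_pos.mpr γ.2.1
  have hσcard : σ.1.card = γ.1.card + 1 := Finset.card_insert_of_notMem hkγ
  have h2σ : 2 ≤ σ.1.card := by omega
  have herase : σ.1.erase k = γ.1 := Finset.erase_insert hkγ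
  have hDiff : ∀ β : Horn n k, (β ∈ S ∧ β ≤ σ) ↔ β ∈ HornSet σ.1 := by
    intro β
    constructor
    · rintro ⟨hβS, hβσ⟩
      refine ⟨Finset.ssubset_iff_subset_ne.mpr ⟨hβσ, fun h => hσS ?_⟩, fun h => hγS ?_⟩
      · rwa [show β = σ from Subtype.ext h] at hβS
      · rwa [show β = γ from Subtype.ext (h.trans herase)] at hβS
    · rintro ⟨hβlt, hβne⟩
      have hβσ : β ≤ σ := hβlt.subset
      refine ⟨?_, hβσ⟩
      by_contra hβS
      have hβH : β ∈ HornSet T := hornSet_down hk hσH hβσ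
      have h1 := hmin β hβH hβS
      have h2' := Finset.card_lt_card hβlt
      have hkβ : k ∉ β.1 := hknotin β hβH hβS (by omega)
      have hsb : β.1 ⊆ γ.1 := by
        intro j hj
        rcases Finset.mem_insert.mp (hβσ hj) with h' | h'
        · exact absurd (h' ▸ hj) hkβ
        · exact h'
      have hβγ : β.1 = γ.1 := Finset.eq_of_subset_of_card_le hsb (by omega)
      exact hβne (hβγ.trans herase.symm)
  refine ⟨σ, γ, hσH, hσS, hγS, hγσ, hkσ, h2σ, hDiff, ?_⟩
  constructor
  · exact Finset.mem_insert_of_mem (Finset.mem_insert_of_mem hG.hb)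
  · intro x hx
    rcases Finset.mem_insert.mp hx with hxe | hx
    · subst hxe; exact hσH
    rcases Finset.mem_insert.mp hx with hxe | hx
    · subst hxe; exact hγH
    · exact hG.hsub x hx
  · intro x hx y hy
    rcases Finset.mem_insert.mp hx with hxe | hx
    · -- x = σ
      subst hxe
      rcases eq_or_lt_of_le hy with rfl | hylt
      · exact Finset.mem_insert_self _ _
      by_cases hyγ : y = γ
      · subst hyγ; exact Finset.mem_insert_of_mem (Finset.mem_insert_self _ _)
      · have : y ∈ HornSet σ.1 := ⟨hylt, fun h => hyγ (Subtype.ext (h.trans herase))⟩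
        exact Finset.mem_insert_of_mem (Finset.mem_insert_of_mem ((hDiff y).mpr this).1)
    rcases Finset.mem_insert.mp hx with hxe | hx
    · -- x = γ
      subst hxe
      rcases eq_or_lt_of_le hy with rfl | hylt
      · exact Finset.mem_insert_of_mem (Finset.mem_insert_self _ _)
      · have hyH : y ∈ HornSet T := hornSet_down hk hγH (le_of_lt hylt)
        have hyS : y ∈ S := by
          by_contra hyS
          have := hmin y hyH hyS
          have := Finset.card_lt_card (show y.1 ⊂ x.1 from hylt)
          omega
        exact Finset.mem_insert_of_mem (Finset.mem_insert_of_mem hyS)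
    · exact Finset.mem_insert_of_mem (Finset.mem_insert_of_mem (hG.hdown x hx y hy))
  · intro x hx y hy
    rcases Finset.mem_insert.mp hx with hxe | hx
    · -- x = σ
      subst hxe
      have : y = σ := Subtype.ext (by rw [hy, Finset.insert_eq_self.mpr hkσ])
      subst this; exact Finset.mem_insert_self _ _
    rcases Finset.mem_insert.mp hx with hxe | hx
    · -- x = γ
      subst hxe
      have : y = σ := Subtype.ext hy
      subst this; exact Finset.mem_insert_self _ _
    · exact Finset.mem_insert_of_mem (Finset.mem_insert_of_mem (hG.hkcl x hx y hy))

end HornAux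


section Collapse
open HornAux
variable {n : ℕ} {k : Fin (n + 1)} {M : Type u} [Category.{v} M]
  [HasLimitsOfSize.{0, 0} M] (MS : ModelStructure M) (F : (Horn n k)ᵒᵖ ⥤ M)

lemma H2lem (hn : 1 ≤ n) (t : ℕ)
    (hfib : ∀ σ : Horn n k, MS.Fib (matchingMap F σ))
    (hwe : ∀ (a b : (Horn n k)ᵒᵖ) (g : a ⟶ b), MS.W (F.map g))
    (IH : ∀ T : Finset (Fin (n + 1)), T.card ≤ t → k ∈ T → 2 ≤ T.card →
      ∀ (S : Finset (Horn n k)), GoodS hn T S →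
      ∀ (h : (↑S : Set (Horn n k)) ⊆ HornSet T),
        MS.Fib (restrictL F h) ∧ MS.W (restrictL F h))
    (σ : Horn n k) (hkσ : k ∈ σ.1) (h2σ : 2 ≤ σ.1.card) (hσt : σ.1.card ≤ t)
    (D : Set (Horn n k)) (hDeq : D = HornSet σ.1) (hD : ∀ β ∈ D, β ≤ σ) :
    MS.Fib (coneMapL F σ D hD) ∧ MS.W (coneMapL F σ D hD) := by
  subst hDeq
  have hτcond := horn_cond σ (Finset.erase_subset k σ.1)
  have hτne : (σ.1.erase k).Nonempty := by
    rw [← Finset.card_pos, Finset.card_erase_of_mem hkσ]; omega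
  set τ : Horn n k := ⟨σ.1.erase k, hτne, hτcond.1, hτcond.2⟩ with hτdef
  have hτlt : τ < σ := Finset.erase_ssubset hkσ
  have hsubB : HornSet σ.1 ⊆ {β : Horn n k | β < σ} := fun β hβ => hβ.1
  have hτS : τ ∉ HornSet (σ.1 : Finset (Fin (n+1))) := fun hmem => hmem.2 rfl
  have hup : ∀ β ∈ {β : Horn n k | β < σ}, β ∉ HornSet σ.1 → β ≤ τ := by
    intro β hβ hβn
    simp only [HornSet, Set.mem_setOf_eq, not_and, not_not] at hβn
    exact show β.1 ≤ σ.1.erase k from le_of_eq (hβn hβ)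
  have hmax : ∀ β ∈ {β : Horn n k | β < σ}, β ∉ HornSet σ.1 →
      ∀ β' ∈ HornSet (σ.1 : Finset (Fin (n+1))), ¬ β ≤ β' := by
    intro β hβ hβn β' hβ' hle
    simp only [HornSet, Set.mem_setOf_eq, not_and, not_not] at hβn
    have heq : β.1 = σ.1.erase k := hβn hβ
    have hsub : σ.1.erase k ⊆ β'.1 := heq ▸ (hle : β.1 ⊆ β'.1)
    rcases between_erase hkσ hsub hβ'.1.subset with h' | h'
    · exact hβ'.2 h'
    · exact hβ'.1.ne h'
  have pb := isPullback_ATT F hsubB (show τ ∈ {β : Horn n k | β < σ} from hτlt) hτS hup hmax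
  have hD2eq : {β : Horn n k | β ∈ HornSet σ.1 ∧ β ≤ τ} = {β : Horn n k | β < τ} := by
    ext β
    simp only [Set.mem_setOf_eq]
    constructor
    · rintro ⟨hβH, hβτ⟩
      exact lt_of_le_of_ne hβτ (fun h => hτS (h ▸ hβH))
    · intro hβτ
      have hβσ : β.1 ⊂ σ.1 := lt_trans (show β.1 ⊂ τ.1 from hβτ) hτlt
      exact ⟨⟨hβσ, (show β.1 ⊂ τ.1 from hβτ).ne⟩, le_of_lt hβτ⟩
  have hFibτ : MS.Fib (coneMapL F τ {β : Horn n k | β ∈ HornSet σ.1 ∧ β ≤ τ}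
      (fun β hβ => hβ.2)) := fib_coneMapL_of_below F MS τ _ hD2eq _ (hfib τ)
  have hFibRes : MS.Fib (restrictL F hsubB) := MS_fib_of_isPullback MS pb hFibτ
  have hFibB : MS.Fib (coneMapL F σ {β : Horn n k | β < σ} (fun β hβ => le_of_lt hβ)) :=
    fib_coneMapL_of_below F MS σ _ rfl _ (hfib σ)
  have hcomp1 : coneMapL F σ (HornSet σ.1) hD =
      coneMapL F σ {β : Horn n k | β < σ} (fun β hβ => le_of_lt hβ) ≫ restrictL F hsubB := by
    apply LS_hom_ext
    intro β hβ
    rw [Category.assoc, restrictL_pi, coneMapL_pi, coneMapL_pi]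
  have hFib : MS.Fib (coneMapL F σ (HornSet σ.1) hD) := by
    rw [hcomp1]; exact MS_fib_comp MS _ _ hFibB hFibRes
  -- weak equivalence part
  have hG1 := goodS_singleton (k := k) hn hkσ h2σ
  have hsub1 : (↑({bElt n k hn} : Finset (Horn n k)) : Set (Horn n k)) ⊆ HornSet σ.1 := by
    intro x hx
    rw [Finset.coe_singleton, Set.mem_singleton_iff] at hx
    subst hx
    exact bElt_mem_hornSet hkσ h2σ hn
  obtain ⟨hFibR, hWR⟩ := IH σ.1 hσt hkσ h2σ _ hG1 hsub1
  have hmemb : bElt n k hn ∈ (↑({bElt n k hn} : Finset (Horn n k)) : Set (Horn n k)) := by simp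
  have hisoPi : IsIso (piS F hmemb) := isIso_piS_of_singleton F hmemb
    (by intro x hx; simpa using hx)
  haveI := hisoPi
  have hball : ∀ β ∈ (↑({bElt n k hn} : Finset (Horn n k)) : Set (Horn n k)), β ≤ σ := by
    intro x hx
    rw [Finset.coe_singleton, Set.mem_singleton_iff] at hx
    subst hx
    exact Finset.singleton_subset_iff.mpr hkσ
  have hcomp2 : coneMapL F σ (HornSet σ.1) hD ≫ restrictL F hsub1 = coneMapL F σ _ hball := by
    apply LS_hom_ext
    intro β hβ
    rw [Category.assoc, restrictL_pi, coneMapL_pi, coneMapL_pi]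
  have hWsmall : MS.W (coneMapL F σ _ hball) := by
    apply MS.w_cancel_right _ (piS F hmemb) (MS_w_of_iso MS _)
    rw [coneMapL_pi]
    exact hwe _ _ _
  have hW : MS.W (coneMapL F σ (HornSet σ.1) hD) :=
    MS.w_cancel_right _ (restrictL F hsub1) hWR (by rw [hcomp2]; exact hWsmall)
  exact ⟨hFib, hW⟩

lemma collapseAux (hn : 1 ≤ n)
    (hfib : ∀ σ : Horn n k, MS.Fib (matchingMap F σ))
    (hwe : ∀ (a b : (Horn n k)ᵒᵖ) (g : a ⟶ b), MS.W (F.map g)) :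
    ∀ t : ℕ, ∀ T : Finset (Fin (n + 1)), T.card ≤ t → k ∈ T → 2 ≤ T.card →
    ∀ (S : Finset (Horn n k)), GoodS hn T S →
    ∀ (h : (↑S : Set (Horn n k)) ⊆ HornSet T),
      MS.Fib (restrictL F h) ∧ MS.W (restrictL F h) := by
  intro t
  induction t with
  | zero => intro T hT hk h2; omega
  | succ t ih =>
    intro T hTt hkT h2T
    suffices hstep : ∀ c : ℕ, ∀ (S : Finset (Horn n k)), GoodS hn T S →
        ∀ (h : (↑S : Set (Horn n k)) ⊆ HornSet T),
        Fintype.card (Horn n k) - S.card ≤ c →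
        MS.Fib (restrictL F h) ∧ MS.W (restrictL F h) by
      intro S hG h
      exact hstep (Fintype.card (Horn n k)) S hG h (Nat.sub_le _ _)
    have hcovered : ∀ (S : Finset (Horn n k)),
        (∀ x : Horn n k, x ∈ HornSet T → x ∈ S) →
        ∀ (h : (↑S : Set (Horn n k)) ⊆ HornSet T),
        MS.Fib (restrictL F h) ∧ MS.W (restrictL F h) := by
      intro S hcov h
      haveI := isIso_restrictL_of_eq F h (fun x hx => Finset.mem_coe.mpr (hcov x hx))
      exact ⟨MS_fib_of_iso MS _, MS_w_of_iso MS _⟩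
    intro c
    induction c with
    | zero =>
      intro S hG h hc
      have hs : S.card ≤ Fintype.card (Horn n k) := by
        simpa using Finset.card_le_univ S
      have huniv : S = Finset.univ := Finset.eq_univ_of_card S (by omega)
      exact hcovered S (fun x _ => huniv ▸ Finset.mem_univ x) h
    | succ c ihc =>
      intro S hG h hc
      by_cases hcov : ∀ x : Horn n k, x ∈ HornSet T → x ∈ S
      · exact hcovered S hcov h
      · obtain ⟨σ, γ, hσH, hσS, hγS, hγσ, hkσ, h2σ, hDiff, hG'⟩ :=
          step_exists hn hkT h2T hG hcov
        have hsub' : (↑(insert σ (insert γ S)) : Set (Horn n k)) ⊆ HornSet T := by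
          intro x hx
          exact hG'.hsub x (Finset.mem_coe.mp hx)
        have hSS' : (↑S : Set (Horn n k)) ⊆ ↑(insert σ (insert γ S)) := by
          intro x hx
          simp only [Finset.coe_insert, Set.mem_insert_iff]
          right; right; exact hx
        have hσmem' : σ ∈ (↑(insert σ (insert γ S)) : Set (Horn n k)) := by simp
        have hσnot : σ ∉ (↑S : Set (Horn n k)) := by simpa using hσS
        have hup : ∀ β ∈ (↑(insert σ (insert γ S)) : Set (Horn n k)),
            β ∉ (↑S : Set (Horn n k)) → β ≤ σ := by
          intro β hβ hβn
          simp only [Finset.coe_insert, Set.mem_insert_iff, Finset.mem_coe] at hβ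
          rcases hβ with rfl | hβ
          · exact le_refl _
          rcases hβ with rfl | hβ
          · exact le_of_lt hγσ
          · exact absurd (Finset.mem_coe.mpr hβ) hβn
        have hmax : ∀ β ∈ (↑(insert σ (insert γ S)) : Set (Horn n k)),
            β ∉ (↑S : Set (Horn n k)) → ∀ β' ∈ (↑S : Set (Horn n k)), ¬ β ≤ β' := by
          intro β hβ hβn β' hβ' hle
          exact hβn (Finset.mem_coe.mpr (hG.hdown β' (Finset.mem_coe.mp hβ') β hle))
        have pb := isPullback_ATT F hSS' hσmem' hσnot hup hmax
        have hDeq : {β : Horn n k | β ∈ (↑S : Set (Horn n k)) ∧ β ≤ σ} = HornSet σ.1 := by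
          ext β
          rw [Set.mem_setOf_eq, Finset.mem_coe]
          exact hDiff β
        have hσt : σ.1.card ≤ t := by
          have := Finset.card_lt_card hσH.1
          omega
        have hTF := H2lem MS F hn t hfib hwe ih σ hkσ h2σ hσt _ hDeq (fun β hβ => hβ.2)
        have hstep1 := MS_trivFib_of_isPullback MS pb hTF
        have hmeas : Fintype.card (Horn n k) - (insert σ (insert γ S)).card ≤ c := by
          have hssub : S ⊂ insert σ (insert γ S) := by
            refine Finset.ssubset_iff_subset_ne.mpr ⟨?_, ?_⟩
            · intro x hx; exact Finset.mem_insert_of_mem (Finset.mem_insert_of_mem hx)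
            · intro he
              exact hσS (he ▸ Finset.mem_insert_self σ _)
          have := Finset.card_lt_card hssub
          omega
        obtain ⟨hF2, hW2⟩ := ihc (insert σ (insert γ S)) hG' hsub' hmeas
        have hco : restrictL F h = restrictL F hsub' ≫ restrictL F hSS' :=
          (restrictL_comp F hSS' hsub').symm
        rw [hco]
        exact ⟨MS_fib_comp MS _ _ hF2 hstep1.1, MS.w_comp _ _ hW2 hstep1.2⟩

end Collapse

/-- for a fibrant diagram `F : (Λⁿ_k)ᵒᵖ ⥤ M` sending every inclusion to a
weak equivalence, every canonical projection from the limit is a weak equivalence. -/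
theorem limit_projection_weakEquivalence_of_horn_diagram
    (n : ℕ) (hn : 1 ≤ n) (k : Fin (n + 1))
    {M : Type u} [Category.{v} M] [HasLimitsOfSize.{0, 0} M] (MS : ModelStructure M)
    (F : (Horn n k)ᵒᵖ ⥤ M)
    (hfib : ∀ σ : Horn n k, MS.Fib (matchingMap F σ))
    (hwe : ∀ (a b : (Horn n k)ᵒᵖ) (g : a ⟶ b), MS.W (F.map g))
    (α' : Horn n k) :
    MS.W (limit.π F (op α')) := by
  classical
  have hkU : k ∈ (Finset.univ : Finset (Fin (n + 1))) := Finset.mem_univ k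
  have h2U : 2 ≤ (Finset.univ : Finset (Fin (n + 1))).card := by
    rw [Finset.card_univ, Fintype.card_fin]; omega
  have hsub0 : (↑({HornAux.bElt n k hn} : Finset (Horn n k)) : Set (Horn n k)) ⊆
      HornAux.HornSet Finset.univ := fun x _ => HornAux.mem_hornSet_univ x
  obtain ⟨hFib0, hW0⟩ := collapseAux MS F hn hfib hwe (n + 1) Finset.univ
    (by rw [Finset.card_univ, Fintype.card_fin]) hkU h2U {HornAux.bElt n k hn}
    (HornAux.goodS_singleton hn hkU h2U) hsub0
  have hmemb : HornAux.bElt n k hn ∈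
      (↑({HornAux.bElt n k hn} : Finset (Horn n k)) : Set (Horn n k)) := by simp
  haveI : IsIso (piS F hmemb) := isIso_piS_of_singleton F hmemb (by intro x hx; simpa using hx)
  haveI := resL_isIso_of_univ F (HornAux.HornSet (Finset.univ : Finset (Fin (n + 1))))
    HornAux.mem_hornSet_univ
  have hdec : limit.π F (op (HornAux.bElt n k hn)) =
      (resL F (HornAux.HornSet Finset.univ) ≫ restrictL F hsub0) ≫ piS F hmemb := by
    rw [Category.assoc, restrictL_pi, resL_pi]
  have hWb : MS.W (limit.π F (op (HornAux.bElt n k hn))) := by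
    rw [hdec]
    exact MS.w_comp _ _ (MS.w_comp _ _ (MS_w_of_iso MS _) hW0) (MS_w_of_iso MS _)
  have hδcond := HornAux.insert_k_horn α'
  set δ : Horn n k := ⟨insert k α'.1, Finset.insert_nonempty _ _, hδcond.1, hδcond.2⟩ with hδdef
  have h1 : α' ≤ δ := Finset.subset_insert k α'.1
  have h2 : HornAux.bElt n k hn ≤ δ :=
    Finset.singleton_subset_iff.mpr (Finset.mem_insert_self k _)
  have e1 : limit.π F (op δ) ≫ F.map (homOfLE h1).op = limit.π F (op α') :=
    limit.w F (homOfLE h1).op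
  have e2 : limit.π F (op δ) ≫ F.map (homOfLE h2).op =
      limit.π F (op (HornAux.bElt n k hn)) := limit.w F (homOfLE h2).op
  have hWδ : MS.W (limit.π F (op δ)) :=
    MS.w_cancel_right _ _ (hwe _ _ _) (by rw [e2]; exact hWb)
  rw [← e1]
  exact MS.w_comp _ _ hWδ (hwe _ _ _)
end

section
/- Let E be a model category with functorial factorizations giving a cofibrant replacement functor Q (with a natural trivial fibration q_X : QX → X, QX cofibrant) and a fibrant replacement functor R (with a natural trivial cofibration r_X : X → RX, RX fibrant). Let D ⊆ E be a full subcategory closed under Q and R (if X ∈ D then QX ∈ D and RX ∈ D) and such that every object of D admits a cylinder object belonging to D, and let W_D be the class of weak equivalences of E lying in D. Then for all X, Y ∈ D the assignment sending a map f : QX → RY to the composite L(r_Y)⁻¹ ∘ L(f) ∘ L(q_X)⁻¹ : X → Y in D[W_D⁻¹] induces a bijection Hom_D(QX, RY)/∼ ≅ Hom_{D[W_D⁻¹]}(X, Y), where ∼ is the left-homotopy relation. -/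
open CategoryTheory Limits

universe v u

variable {C : Type u} [Category.{v} C]

/-- The class of weak equivalences of `E` lying in the full subcategory of objects
satisfying `P`. -/
def subW {E : Type u} [Category.{v} E] (MS : ModelStructure E) (P : E → Prop) :
    MorphismProperty (ObjectProperty.FullSubcategory P) :=
  fun X Y f => MS.W (X := X.obj) (Y := Y.obj) f.hom

/-- The map sending `f : QX ⟶ RY` to `L(r_Y)⁻¹ ∘ L(f) ∘ L(q_X)⁻¹ : X ⟶ Y` in the
localization `D[W_D⁻¹]` of the full subcategory `D` of objects satisfying `P`. -/
noncomputable def locRep {E : Type u} [Category.{v} E]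
    (MS : ModelStructure E) (P : E → Prop)
    {QX X RY Y : E} (hQX : P QX) (hX : P X) (hRY : P RY) (hY : P Y)
    (qX : QX ⟶ X) (hq : MS.W qX) (rY : Y ⟶ RY) (hr : MS.W rY)
    (f : QX ⟶ RY) :
    (subW MS P).Q.obj ⟨X, hX⟩ ⟶ (subW MS P).Q.obj ⟨Y, hY⟩ :=
  (Localization.isoOfHom (subW MS P).Q (subW MS P)
      (show (⟨QX, hQX⟩ : ObjectProperty.FullSubcategory P) ⟶ ⟨X, hX⟩ from ObjectProperty.homMk qX) hq).inv ≫
    (subW MS P).Q.map (show (⟨QX, hQX⟩ : ObjectProperty.FullSubcategory P) ⟶ ⟨RY, hRY⟩ from ObjectProperty.homMk f) ≫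
    (Localization.isoOfHom (subW MS P).Q (subW MS P)
      (show (⟨Y, hY⟩ : ObjectProperty.FullSubcategory P) ⟶ ⟨RY, hRY⟩ from ObjectProperty.homMk rY) hr).inv

attribute [local simp] coprod.inl_desc coprod.inr_desc coprod.inl_desc_assoc coprod.inr_desc_assoc

section Helpers

open CategoryTheory Limits

variable {E : Type u} [Category.{v} E]

lemma exists_lift_of_hlp {A B U V : E} {i : A ⟶ B} {p : U ⟶ V}
    (h : HasLiftingProperty i p) {f : A ⟶ U} {g : B ⟶ V} (w : f ≫ p = i ≫ g) :
    ∃ l : B ⟶ U, i ≫ l = f ∧ l ≫ p = g := by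
  obtain ⟨l⟩ := (h.sq_hasLift (CommSq.mk w)).exists_lift
  exact ⟨l.l, l.fac_left, l.fac_right⟩

namespace ModelStructure

variable (MS : ModelStructure E)

lemma cof_of_llp {A B : E} {i : A ⟶ B}
    (h : ∀ {U V : E} (p : U ⟶ V), MS.Fib p → MS.W p → HasLiftingProperty i p) :
    MS.Cof i := by
  obtain ⟨Z, c, t, hc, htf, htw, hfac⟩ := MS.factor_cof_trivFib i
  obtain ⟨l, hl1, hl2⟩ := exists_lift_of_hlp (h t htf htw) (f := c) (g := 𝟙 B)
    (by rw [hfac, Category.comp_id])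
  exact MS.cof_retract i c
    ⟨𝟙 A, 𝟙 A, l, t, by simp, hl2, by simpa using hl1, by simpa using hfac.symm⟩ hc

lemma trivCof_of_llp {A B : E} {i : A ⟶ B}
    (h : ∀ {U V : E} (p : U ⟶ V), MS.Fib p → HasLiftingProperty i p) :
    MS.Cof i ∧ MS.W i := by
  obtain ⟨Z, c, t, hc, hcw, htf, hfac⟩ := MS.factor_trivCof_fib i
  obtain ⟨l, hl1, hl2⟩ := exists_lift_of_hlp (h t htf) (f := c) (g := 𝟙 B)
    (by rw [hfac, Category.comp_id])
  have hret : IsRetractOf i c :=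
    ⟨𝟙 A, 𝟙 A, l, t, by simp, hl2, by simpa using hl1, by simpa using hfac.symm⟩
  exact ⟨MS.cof_retract i c hret hc, MS.w_retract i c hret hcw⟩

lemma fib_of_rlp {U V : E} {p : U ⟶ V}
    (h : ∀ {A B : E} (i : A ⟶ B), MS.Cof i → MS.W i → HasLiftingProperty i p) :
    MS.Fib p := by
  obtain ⟨Z, j, qq, hjc, hjw, hqf, hfac⟩ := MS.factor_trivCof_fib p
  obtain ⟨l, hl1, hl2⟩ := exists_lift_of_hlp (h j hjc hjw) (f := 𝟙 U) (g := qq)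
    (by rw [hfac, Category.id_comp])
  exact MS.fib_retract p qq
    ⟨j, l, 𝟙 V, 𝟙 V, hl1, by simp, by simpa using hfac.symm, by simpa using hl2⟩ hqf

lemma cof_comp {A B C : E} {i : A ⟶ B} {j : B ⟶ C} (hi : MS.Cof i) (hj : MS.Cof j) :
    MS.Cof (i ≫ j) :=
  MS.cof_of_llp (fun p hf hw => by
    haveI := MS.lift_cof_trivFib i p hi hf hw
    haveI := MS.lift_cof_trivFib j p hj hf hw
    infer_instance)

lemma fib_comp {A B C : E} {p : A ⟶ B} {p' : B ⟶ C} (hp : MS.Fib p) (hp' : MS.Fib p') :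
    MS.Fib (p ≫ p') :=
  MS.fib_of_rlp (fun i hc hw => by
    haveI := MS.lift_trivCof_fib i p hc hw hp
    haveI := MS.lift_trivCof_fib i p' hc hw hp'
    infer_instance)

lemma cof_iso_comp {A' A B : E} (e : A' ⟶ A) [IsIso e] {i : A ⟶ B} (hi : MS.Cof i) :
    MS.Cof (e ≫ i) :=
  MS.cof_of_llp (fun p hf hw => by
    haveI := MS.lift_cof_trivFib i p hi hf hw
    infer_instance)

lemma fibrant_of_fib {A B : E} [HasTerminal E] {p : A ⟶ B} (hp : MS.Fib p)
    (hB : MS.Fibrant B) : MS.Fibrant A := by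
  have : terminal.from A = p ≫ terminal.from B := Subsingleton.elim _ _
  rw [Fibrant, this]
  exact MS.fib_comp hp hB

lemma cofibrant_of_cof {A B : E} [HasInitial E] {i : A ⟶ B} (hi : MS.Cof i)
    (hA : MS.Cofibrant A) : MS.Cofibrant B := by
  have : initial.to B = initial.to A ≫ i := Subsingleton.elim _ _
  rw [Cofibrant, this]
  exact MS.cof_comp hA hi

/-- Extension along a trivial cofibration into a fibrant object. -/
lemma exists_ext [HasTerminal E] {A B Y : E} (hY : MS.Fibrant Y) {j : A ⟶ B}
    (hjc : MS.Cof j) (hjw : MS.W j) (u : A ⟶ Y) : ∃ v : B ⟶ Y, j ≫ v = u := by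
  obtain ⟨l, hl, -⟩ := exists_lift_of_hlp (MS.lift_trivCof_fib j (terminal.from Y) hjc hjw hY)
    (f := u) (g := terminal.from B) (Subsingleton.elim _ _)
  exact ⟨l, hl⟩

/-- Lifting through a trivial fibration from a cofibrant object. -/
lemma exists_lift_cofibrant [HasInitial E] {X U V : E} (hX : MS.Cofibrant X) {p : U ⟶ V}
    (hpf : MS.Fib p) (hpw : MS.W p) (u : X ⟶ V) : ∃ l : X ⟶ U, l ≫ p = u := by
  obtain ⟨l, -, hl⟩ := exists_lift_of_hlp (MS.lift_cof_trivFib (initial.to X) p hX hpf hpw)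
    (f := initial.to U) (g := u) (Subsingleton.elim _ _)
  exact ⟨l, hl⟩

variable [HasBinaryCoproducts E]

lemma cof_inl [HasInitial E] {A Z : E} (hZ : MS.Cofibrant Z) :
    MS.Cof (coprod.inl : A ⟶ A ⨿ Z) := by
  apply MS.cof_of_llp
  intro U V p hf hw
  constructor
  intro t b sq
  obtain ⟨z, hz⟩ := MS.exists_lift_cofibrant hZ hf hw (coprod.inr ≫ b)
  exact CommSq.HasLift.mk'
    ⟨coprod.desc t z, by simp, by
      apply coprod.hom_ext
      · simpa using sq.w
      · simpa using hz⟩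

lemma cof_inr [HasInitial E] {A Z : E} (hA : MS.Cofibrant A) :
    MS.Cof (coprod.inr : Z ⟶ A ⨿ Z) := by
  apply MS.cof_of_llp
  intro U V p hf hw
  constructor
  intro t b sq
  obtain ⟨z, hz⟩ := MS.exists_lift_cofibrant hA hf hw (coprod.inl ≫ b)
  exact CommSq.HasLift.mk'
    ⟨coprod.desc z t, by simp, by
      apply coprod.hom_ext
      · simpa using hz
      · simpa using sq.w⟩

lemma cof_coprodMap {A A' B B' : E} {f : A ⟶ A'} {g : B ⟶ B'}
    (hf : MS.Cof f) (hg : MS.Cof g) : MS.Cof (coprod.map f g) := by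
  apply MS.cof_of_llp
  intro U V p hpf hpw
  constructor
  intro t b sq
  obtain ⟨l₁, hl₁, hl₁'⟩ := exists_lift_of_hlp (MS.lift_cof_trivFib f p hf hpf hpw)
    (f := coprod.inl ≫ t) (g := coprod.inl ≫ b)
    (by rw [Category.assoc, sq.w, ← Category.assoc, coprod.inl_map, Category.assoc])
  obtain ⟨l₂, hl₂, hl₂'⟩ := exists_lift_of_hlp (MS.lift_cof_trivFib g p hg hpf hpw)
    (f := coprod.inr ≫ t) (g := coprod.inr ≫ b)
    (by rw [Category.assoc, sq.w, ← Category.assoc, coprod.inr_map, Category.assoc])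
  exact CommSq.HasLift.mk'
    ⟨coprod.desc l₁ l₂, by
      apply coprod.hom_ext
      · simpa using hl₁
      · simpa using hl₂, by
      apply coprod.hom_ext
      · simpa using hl₁'
      · simpa using hl₂'⟩

end ModelStructure

end Helpers
section Homotopies

open CategoryTheory Limits

variable {E : Type u} [Category.{v} E] [HasBinaryCoproducts E]

namespace ModelStructure

variable (MS : ModelStructure E)

/-- A good cylinder object with fibration projection. -/
lemma exists_goodCyl (X : E) : ∃ C : CylObj MS X, MS.Fib C.π := by
  obtain ⟨Z, i, p, hic, hpf, hpw, hfac⟩ :=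
    MS.factor_cof_trivFib (coprod.desc (𝟙 X) (𝟙 X))
  refine ⟨⟨Z, coprod.inl ≫ i, coprod.inr ≫ i, p, ?_, hpw, ?_, ?_⟩, hpf⟩
  · have : coprod.desc (coprod.inl ≫ i) (coprod.inr ≫ i) = i := by
      apply coprod.hom_ext <;> simp
    rw [this]; exact hic
  · rw [Category.assoc, hfac]; simp
  · rw [Category.assoc, hfac]; simp

end ModelStructure

namespace CylObj

variable {MS : ModelStructure E}

lemma w_i₀ {X : E} (C : CylObj MS X) : MS.W C.i₀ :=
  MS.w_cancel_right _ _ C.we (by rw [C.h₀]; exact MS.w_id X)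

lemma w_i₁ {X : E} (C : CylObj MS X) : MS.W C.i₁ :=
  MS.w_cancel_right _ _ C.we (by rw [C.h₁]; exact MS.w_id X)

lemma cof_i₀ [HasInitial E] {X : E} (C : CylObj MS X) (hX : MS.Cofibrant X) :
    MS.Cof C.i₀ := by
  have : C.i₀ = coprod.inl ≫ coprod.desc C.i₀ C.i₁ := by simp
  rw [this]; exact MS.cof_comp (MS.cof_inl hX) C.cof

lemma cof_i₁ [HasInitial E] {X : E} (C : CylObj MS X) (hX : MS.Cofibrant X) :
    MS.Cof C.i₁ := by
  have : C.i₁ = coprod.inr ≫ coprod.desc C.i₀ C.i₁ := by simp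
  rw [this]; exact MS.cof_comp (MS.cof_inr hX) C.cof

end CylObj

variable {MS : ModelStructure E}

lemma LeftHomotopic.symm {X Y : E} {f g : X ⟶ Y} (h : LeftHomotopic MS f g) :
    LeftHomotopic MS g f := by
  obtain ⟨C, H, h0, h1⟩ := h
  refine ⟨⟨C.I, C.i₁, C.i₀, C.π, ?_, C.we, C.h₁, C.h₀⟩, H, h1, h0⟩
  have : coprod.desc C.i₁ C.i₀ = (coprod.braiding X X).hom ≫ coprod.desc C.i₀ C.i₁ := by
    apply coprod.hom_ext <;> simp
  rw [this]
  exact MS.cof_iso_comp _ C.cof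

lemma leftHomotopic_refl {X Y : E} (f : X ⟶ Y) : LeftHomotopic MS f f := by
  obtain ⟨C, -⟩ := MS.exists_goodCyl X
  exact ⟨C, C.π ≫ f, by rw [← Category.assoc, C.h₀, Category.id_comp],
    by rw [← Category.assoc, C.h₁, Category.id_comp]⟩

lemma LeftHomotopic.postcomp {X Y Z : E} {f g : X ⟶ Y} (h : LeftHomotopic MS f g)
    (e : Y ⟶ Z) : LeftHomotopic MS (f ≫ e) (g ≫ e) := by
  obtain ⟨C, H, h0, h1⟩ := h
  exact ⟨C, H ≫ e, by rw [← Category.assoc, h0], by rw [← Category.assoc, h1]⟩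

/-- Restrict a homotopy along `d : X ⟶ A` and realize it on any prescribed cylinder
object for `X`, provided the target is fibrant. -/
lemma exists_homotopy_precomp [HasInitial E] [HasTerminal E] {A X Y : E}
    (hY : MS.Fibrant Y) (C : CylObj MS A) {m₀ m₁ : A ⟶ Y}
    (H : C.I ⟶ Y) (hH0 : C.i₀ ≫ H = m₀) (hH1 : C.i₁ ≫ H = m₁)
    (d : X ⟶ A) (C' : CylObj MS X) :
    ∃ H' : C'.I ⟶ Y, C'.i₀ ≫ H' = d ≫ m₀ ∧ C'.i₁ ≫ H' = d ≫ m₁ := by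
  obtain ⟨It, k, pt, hkc, hkw, hpf, hfac⟩ := MS.factor_trivCof_fib C.π
  have hpw : MS.W pt := MS.w_cancel_left _ _ hkw (by rw [hfac]; exact C.we)
  obtain ⟨Ht, hHt⟩ := MS.exists_ext hY hkc hkw H
  obtain ⟨ψ, hψ1, hψ2⟩ := exists_lift_of_hlp
    (MS.lift_cof_trivFib _ pt C'.cof hpf hpw)
    (f := coprod.desc (d ≫ C.i₀ ≫ k) (d ≫ C.i₁ ≫ k)) (g := C'.π ≫ d)
    (by
      apply coprod.hom_ext
      · simp only [coprod.inl_desc_assoc, coprod.inl_desc, Category.assoc]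
        rw [hfac, C.h₀, Category.comp_id, ← Category.assoc, C'.h₀, Category.id_comp]
      · simp only [coprod.inr_desc_assoc, coprod.inr_desc, Category.assoc]
        rw [hfac, C.h₁, Category.comp_id, ← Category.assoc, C'.h₁, Category.id_comp])
  have e0 : C'.i₀ ≫ ψ = d ≫ C.i₀ ≫ k := by
    have := congrArg (fun z => coprod.inl ≫ z) hψ1
    simpa using this
  have e1 : C'.i₁ ≫ ψ = d ≫ C.i₁ ≫ k := by
    have := congrArg (fun z => coprod.inr ≫ z) hψ1
    simpa using this
  refine ⟨ψ ≫ Ht, ?_, ?_⟩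
  · rw [← Category.assoc, e0, Category.assoc, Category.assoc, hHt, ← hH0]
  · rw [← Category.assoc, e1, Category.assoc, Category.assoc, hHt, ← hH1]

lemma LeftHomotopic.precomp [HasInitial E] [HasTerminal E] {A X Y : E}
    {m₀ m₁ : A ⟶ Y} (h : LeftHomotopic MS m₀ m₁) (hY : MS.Fibrant Y) (d : X ⟶ A) :
    LeftHomotopic MS (d ≫ m₀) (d ≫ m₁) := by
  obtain ⟨C, H, h0, h1⟩ := h
  obtain ⟨C', -⟩ := MS.exists_goodCyl X
  obtain ⟨H', e0, e1⟩ := exists_homotopy_precomp hY C H h0 h1 d C'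
  exact ⟨C', H', e0, e1⟩

/-- Transfer a homotopy to a prescribed cylinder object (fibrant target). -/
lemma LeftHomotopic.via [HasInitial E] [HasTerminal E] {X Y : E} {m₀ m₁ : X ⟶ Y}
    (h : LeftHomotopic MS m₀ m₁) (hY : MS.Fibrant Y) (C' : CylObj MS X) :
    ∃ H' : C'.I ⟶ Y, C'.i₀ ≫ H' = m₀ ∧ C'.i₁ ≫ H' = m₁ := by
  obtain ⟨C, H, h0, h1⟩ := h
  obtain ⟨H', e0, e1⟩ := exists_homotopy_precomp hY C H h0 h1 (𝟙 X) C'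
  exact ⟨H', by simpa using e0, by simpa using e1⟩

/-- Two lifts through a trivial fibration of the same map are homotopic. -/
lemma exists_homotopy_of_lifts {U V X : E} {p : U ⟶ V} (hpf : MS.Fib p) (hpw : MS.W p)
    {l₀ l₁ : X ⟶ U} (hl : l₀ ≫ p = l₁ ≫ p) (C : CylObj MS X) :
    ∃ K : C.I ⟶ U, C.i₀ ≫ K = l₀ ∧ C.i₁ ≫ K = l₁ := by
  obtain ⟨K, hK1, -⟩ := exists_lift_of_hlp (MS.lift_cof_trivFib _ p C.cof hpf hpw)
    (f := coprod.desc l₀ l₁) (g := C.π ≫ l₀ ≫ p)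
    (by
      apply coprod.hom_ext
      · simp only [coprod.inl_desc_assoc, coprod.inl_desc]
        rw [← Category.assoc, C.h₀, Category.id_comp]
      · simp only [coprod.inr_desc_assoc, coprod.inr_desc]
        rw [← Category.assoc, C.h₁, Category.id_comp]
        exact hl.symm)
  have e0 := congrArg (fun z => coprod.inl ≫ z) hK1
  have e1 := congrArg (fun z => coprod.inr ≫ z) hK1
  exact ⟨K, by simpa using e0, by simpa using e1⟩

/-- Postcomposition with a weak equivalence with fibrant source reflects homotopy. -/
lemma homotopic_of_comp_we [HasTerminal E] {S T X : E} {v : S ⟶ T} (hv : MS.W v)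
    (hS : MS.Fibrant S) {a b : X ⟶ S}
    (h : LeftHomotopic MS (a ≫ v) (b ≫ v)) : LeftHomotopic MS a b := by
  obtain ⟨C, K, hK0, hK1⟩ := h
  obtain ⟨T₂, j, p, hjc, hjw, hpf, hfac⟩ := MS.factor_trivCof_fib v
  have hpw : MS.W p := MS.w_cancel_left _ _ hjw (by rw [hfac]; exact hv)
  obtain ⟨ρ, hρ⟩ := MS.exists_ext hS hjc hjw (𝟙 S)
  obtain ⟨Kt, ht1, -⟩ := exists_lift_of_hlp (MS.lift_cof_trivFib _ p C.cof hpf hpw)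
    (f := coprod.desc (a ≫ j) (b ≫ j)) (g := K)
    (by
      apply coprod.hom_ext
      · simp only [coprod.inl_desc_assoc, coprod.inl_desc]
        rw [Category.assoc, hfac, hK0]
      · simp only [coprod.inr_desc_assoc, coprod.inr_desc]
        rw [Category.assoc, hfac, hK1])
  have e0 : C.i₀ ≫ Kt = a ≫ j := by
    have := congrArg (fun z => coprod.inl ≫ z) ht1
    simpa using this
  have e1 : C.i₁ ≫ Kt = b ≫ j := by
    have := congrArg (fun z => coprod.inr ≫ z) ht1
    simpa using this
  refine ⟨C, Kt ≫ ρ, ?_, ?_⟩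
  · rw [← Category.assoc, e0, Category.assoc, hρ, Category.comp_id]
  · rw [← Category.assoc, e1, Category.assoc, hρ, Category.comp_id]

lemma w_of_leftHomotopic {X Y : E} {f g : X ⟶ Y} (h : LeftHomotopic MS f g)
    (hg : MS.W g) : MS.W f := by
  obtain ⟨C, H, h0, h1⟩ := h
  have hwH : MS.W H := MS.w_cancel_left _ _ C.w_i₁ (by rw [h1]; exact hg)
  rw [← h0]
  exact MS.w_comp _ _ C.w_i₀ hwH

/-- Lifting a map backwards through a weak equivalence of fibrant objects,
up to homotopy. -/
lemma exists_homotopy_lift [HasInitial E] [HasTerminal E] {S T X : E}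
    (hS : MS.Fibrant S) (hT : MS.Fibrant T) {v : S ⟶ T} (hv : MS.W v)
    (hX : MS.Cofibrant X) (u : X ⟶ T) :
    ∃ f : X ⟶ S, LeftHomotopic MS (f ≫ v) u := by
  obtain ⟨T₂, j₂, p₂, hj₂c, hj₂w, hp₂f, hfacv⟩ := MS.factor_trivCof_fib v
  have hp₂w : MS.W p₂ := MS.w_cancel_left _ _ hj₂w (by rw [hfacv]; exact hv)
  have hT₂ : MS.Fibrant T₂ := MS.fibrant_of_fib hp₂f hT
  obtain ⟨f₁, hf₁⟩ := MS.exists_lift_cofibrant hX hp₂f hp₂w u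
  obtain ⟨ρ, hρ⟩ := MS.exists_ext hS hj₂c hj₂w (𝟙 S)
  have hρw : MS.W ρ := MS.w_cancel_left _ _ hj₂w (by rw [hρ]; exact MS.w_id S)
  obtain ⟨M, c, t, hcc, hcw, htf, hfacρ⟩ := MS.factor_trivCof_fib ρ
  have htw : MS.W t := MS.w_cancel_left _ _ hcw (by rw [hfacρ]; exact hρw)
  obtain ⟨C, -⟩ := MS.exists_goodCyl X
  obtain ⟨ρc, hρc⟩ := MS.exists_ext hT₂ hcc hcw (𝟙 T₂)
  obtain ⟨K, hK0, hK1⟩ := exists_homotopy_of_lifts htf htw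
    (l₀ := (f₁ ≫ c ≫ t) ≫ j₂ ≫ c) (l₁ := f₁ ≫ c)
    (by
      simp only [Category.assoc]
      rw [hfacρ, hρ]
      simp [hfacρ]) C
  refine ⟨f₁ ≫ c ≫ t, C, K ≫ ρc ≫ p₂, ?_, ?_⟩
  · rw [← Category.assoc, hK0]
    simp only [Category.assoc]
    rw [reassoc_of% hρc, hfacv]
  · rw [← Category.assoc, hK1]
    simp only [Category.assoc]
    rw [reassoc_of% hρc, hf₁]

end Homotopies
section Transitivity

open CategoryTheory Limits

variable {E : Type u} [Category.{v} E] [HasBinaryCoproducts E] [HasInitial E] [HasTerminal E]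

variable {MS : ModelStructure E}

/-- Transitivity of left homotopy for maps from a bifibrant object to a
fibrant object. -/
lemma leftHomotopic_trans {X Y : E} (hXc : MS.Cofibrant X) (hXf : MS.Fibrant X)
    (hY : MS.Fibrant Y) {f g h : X ⟶ Y}
    (hfg : LeftHomotopic MS f g) (hgh : LeftHomotopic MS g h) :
    LeftHomotopic MS f h := by
  obtain ⟨C, H, hH0, hH1⟩ := hfg
  obtain ⟨C', G, hG0, hG1⟩ := hgh
  -- Step 1: factor the first homotopy
  obtain ⟨N, jH, pH, hjHc, hjHw, hpHf, hfacH⟩ := MS.factor_trivCof_fib H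
  -- Step 2: retraction-like map ρ' : N ⟶ X extending C.π
  obtain ⟨ρ', hρ'⟩ := MS.exists_ext hXf hjHc hjHw C.π
  have hρ'w : MS.W ρ' := MS.w_cancel_left _ _ hjHw (by rw [hρ']; exact C.we)
  -- Step 3: lift the second homotopy into N through the fibration pH
  have hi₀'c : MS.Cof C'.i₀ := C'.cof_i₀ hXc
  obtain ⟨Gt, hGt0, hGtp⟩ := exists_lift_of_hlp
    (MS.lift_trivCof_fib C'.i₀ pH hi₀'c C'.w_i₀ hpHf)
    (f := C.i₁ ≫ jH) (g := G)
    (by rw [Category.assoc, hfacH, hH1, hG0])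
  -- Step 4: factor ρ' as trivial cofibration jP followed by trivial fibration PT
  obtain ⟨T, jP, PT, hjPc, hjPw, hPTf, hfacP⟩ := MS.factor_trivCof_fib ρ'
  have hPTw : MS.W PT := MS.w_cancel_left _ _ hjPw (by rw [hfacP]; exact hρ'w)
  -- Step 5: extend pH over T
  obtain ⟨Hhat, hHhat⟩ := MS.exists_ext hY hjPc hjPw pH
  -- Step 6: triple cylinder
  obtain ⟨C₃, i₃, π₃, hi₃c, hπ₃f, hπ₃w, hfold⟩ := MS.factor_cof_trivFib
      (coprod.desc (coprod.desc (𝟙 X) (𝟙 X)) (𝟙 X) : (X ⨿ X) ⨿ X ⟶ X)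
  -- Step 7: the comparison map b₃ : C₃ ⟶ X
  obtain ⟨Ct, k', p', hk'c, hk'w, hp'f, hfacπ'⟩ := MS.factor_trivCof_fib C'.π
  have hp'w : MS.W p' := MS.w_cancel_left _ _ hk'w (by rw [hfacπ']; exact C'.we)
  obtain ⟨HM, hHM⟩ := MS.exists_ext hXf hk'c hk'w (Gt ≫ ρ')
  obtain ⟨θ, hθ1, hθ2⟩ := exists_lift_of_hlp
    (MS.lift_cof_trivFib i₃ p' hi₃c hp'f hp'w)
    (f := coprod.desc (coprod.desc (C'.i₀ ≫ k') (C'.i₀ ≫ k')) (C'.i₁ ≫ k'))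
    (g := π₃)
    (by
      rw [hfold]
      apply coprod.hom_ext
      · apply coprod.hom_ext
        · simp only [coprod.inl_desc_assoc, coprod.inr_desc_assoc, coprod.inl_desc,
            coprod.inr_desc, Category.assoc]
          rw [hfacπ', C'.h₀]
        · simp only [coprod.inl_desc_assoc, coprod.inr_desc_assoc, coprod.inl_desc,
            coprod.inr_desc, Category.assoc]
          rw [hfacπ', C'.h₀]
      · simp only [coprod.inl_desc_assoc, coprod.inr_desc_assoc, coprod.inl_desc,
          coprod.inr_desc, Category.assoc]
        rw [hfacπ', C'.h₁])
  -- Step 8: the grand lift Λ : C₃ ⟶ T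
  obtain ⟨Λ, hΛ1, hΛ2⟩ := exists_lift_of_hlp
    (MS.lift_cof_trivFib i₃ PT hi₃c hPTf hPTw)
    (f := coprod.desc (coprod.desc (C.i₀ ≫ jH ≫ jP) (C.i₁ ≫ jH ≫ jP)) (C'.i₁ ≫ Gt ≫ jP))
    (g := θ ≫ HM)
    (by
      rw [reassoc_of% hθ1]
      apply coprod.hom_ext
      · apply coprod.hom_ext
        · simp only [coprod.inl_desc_assoc, coprod.inr_desc_assoc, coprod.inl_desc,
            coprod.inr_desc, Category.assoc]
          rw [hfacP, hρ', C.h₀, hHM, reassoc_of% hGt0, hρ', C.h₁]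
        · simp only [coprod.inl_desc_assoc, coprod.inr_desc_assoc, coprod.inl_desc,
            coprod.inr_desc, Category.assoc]
          rw [hfacP, hρ', C.h₁, hHM, reassoc_of% hGt0, hρ', C.h₁]
      · simp only [coprod.inl_desc_assoc, coprod.inr_desc_assoc, coprod.inl_desc,
          coprod.inr_desc, Category.assoc]
        rw [hfacP, hHM])
  -- Step 9: assemble the homotopy from f to h on the (0,2)-cylinder inside C₃
  have hcof02 : MS.Cof (coprod.desc ((coprod.inl : X ⟶ X ⨿ X) ≫ coprod.inl ≫ i₃)
      ((coprod.inr : X ⟶ (X ⨿ X) ⨿ X) ≫ i₃)) := by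
    have heq : coprod.desc ((coprod.inl : X ⟶ X ⨿ X) ≫ coprod.inl ≫ i₃)
        ((coprod.inr : X ⟶ (X ⨿ X) ⨿ X) ≫ i₃)
        = coprod.map (coprod.inl : X ⟶ X ⨿ X) (𝟙 X) ≫ i₃ := by
      apply coprod.hom_ext <;> simp
    rw [heq]
    exact MS.cof_comp (MS.cof_coprodMap (MS.cof_inl hXc) (MS.cof_id X)) hi₃c
  refine ⟨⟨C₃, coprod.inl ≫ coprod.inl ≫ i₃, coprod.inr ≫ i₃, π₃, hcof02, hπ₃w, ?_, ?_⟩,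
      Λ ≫ Hhat, ?_, ?_⟩
  · simp only [Category.assoc]
    rw [hfold]
    simp
  · rw [Category.assoc, hfold]
    simp
  · -- i₀-end: f
    simp only [Category.assoc]
    rw [reassoc_of% hΛ1]
    simp only [coprod.inl_desc_assoc, coprod.inr_desc_assoc, coprod.inl_desc,
      coprod.inr_desc, Category.assoc]
    rw [hHhat, hfacH, hH0]
  · -- i₁-end: h
    simp only [Category.assoc]
    rw [reassoc_of% hΛ1]
    simp only [coprod.inl_desc_assoc, coprod.inr_desc_assoc, coprod.inl_desc,
      coprod.inr_desc, Category.assoc]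
    rw [hHhat, hGtp, hG1]

/-- Whitehead: a weak equivalence between bifibrant objects is a homotopy
equivalence. -/
lemma whitehead {S T : E} (hSc : MS.Cofibrant S) (hSf : MS.Fibrant S)
    (hTc : MS.Cofibrant T) (hTf : MS.Fibrant T) {v : S ⟶ T} (hv : MS.W v) :
    ∃ w₁ : T ⟶ S, LeftHomotopic MS (v ≫ w₁) (𝟙 S) ∧ LeftHomotopic MS (w₁ ≫ v) (𝟙 T) := by
  obtain ⟨w₁, hw₁⟩ := exists_homotopy_lift hSf hTf hv hTc (𝟙 T)
  have hWw₁ : MS.W w₁ := MS.w_cancel_right w₁ v hv (w_of_leftHomotopic hw₁ (MS.w_id T))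
  obtain ⟨w₂, hw₂⟩ := exists_homotopy_lift hTf hSf hWw₁ hSc (𝟙 S)
  -- v ∼ w₂
  have h1 : LeftHomotopic MS ((w₂ ≫ w₁) ≫ v) v := by
    have := hw₂.postcomp v
    simpa using this
  have h2 : LeftHomotopic MS ((w₂ ≫ w₁) ≫ v) w₂ := by
    have := hw₁.precomp hTf w₂
    simpa [Category.assoc] using this
  have hvw₂ : LeftHomotopic MS v w₂ := leftHomotopic_trans hSc hSf hTf h1.symm h2
  have h3 : LeftHomotopic MS (v ≫ w₁) (w₂ ≫ w₁) := hvw₂.postcomp w₁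
  exact ⟨w₁, leftHomotopic_trans hSc hSf hSf h3 hw₂, hw₁⟩

end Transitivity
section HoCategory

open CategoryTheory Limits Relation

variable {E : Type u} [Category.{v} E] [HasBinaryCoproducts E] [HasInitial E] [HasTerminal E]

/-- A morphism of `E` between objects of the full subcategory, as a morphism of the
full subcategory. -/
def dHom (P : E → Prop) {X Y : E} (hX : P X) (hY : P Y) (f : X ⟶ Y) :
    (⟨X, hX⟩ : ObjectProperty.FullSubcategory P) ⟶ (⟨Y, hY⟩ : ObjectProperty.FullSubcategory P) := ObjectProperty.homMk f

lemma dHom_comp (P : E → Prop) {X Y Z : E} (hX : P X) (hY : P Y) (hZ : P Z)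
    (f : X ⟶ Y) (g : Y ⟶ Z) :
    dHom P hX hY f ≫ dHom P hY hZ g = dHom P hX hZ (f ≫ g) := rfl

lemma dHom_id (P : E → Prop) {X : E} (hX : P X) : dHom P hX hX (𝟙 X) = 𝟙 _ := rfl

variable (MS : ModelStructure E) (Q R : E ⥤ E) (q : Q ⟶ 𝟭 E) (r : 𝟭 E ⟶ R) (P : E → Prop)

/-- Left-homotopic maps in the subcategory become equal in the localization. -/
lemma locQ_map_eq_of_homotopy (hcyl : ∀ X : E, P X → ∃ cyl : CylObj MS X, P cyl.I)
    {X Y : E} (hX : P X) (hY : P Y) {f g : X ⟶ Y} (hYf : MS.Fibrant Y)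
    (h : LeftHomotopic MS f g) :
    (subW MS P).Q.map (dHom P hX hY f) = (subW MS P).Q.map (dHom P hX hY g) := by
  obtain ⟨C, hCP⟩ := hcyl X hX
  obtain ⟨H, e0, e1⟩ := h.via hYf C
  set L := (subW MS P).Q with hL
  haveI hiso : IsIso (L.map (dHom P hCP hX C.π)) :=
    Localization.inverts L (subW MS P) _ C.we
  have h0 : L.map (dHom P hX hCP C.i₀) ≫ L.map (dHom P hCP hX C.π) = 𝟙 _ := by
    rw [← L.map_comp, dHom_comp, C.h₀, dHom_id, L.map_id]
  have h1 : L.map (dHom P hX hCP C.i₁) ≫ L.map (dHom P hCP hX C.π) = 𝟙 _ := by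
    rw [← L.map_comp, dHom_comp, C.h₁, dHom_id, L.map_id]
  have hι : L.map (dHom P hX hCP C.i₀) = L.map (dHom P hX hCP C.i₁) :=
    (cancel_mono (L.map (dHom P hCP hX C.π))).1 (h0.trans h1.symm)
  have hf : dHom P hX hY f = dHom P hX hCP C.i₀ ≫ dHom P hCP hY H := by
    rw [dHom_comp]; exact congrArg (dHom P hX hY) e0.symm
  have hg : dHom P hX hY g = dHom P hX hCP C.i₁ ≫ dHom P hCP hY H := by
    rw [dHom_comp]; exact congrArg (dHom P hX hY) e1.symm
  rw [hf, hg, L.map_comp, L.map_comp, hι]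

/-- Objects of the naive homotopy category. -/
structure HoObj (MS : ModelStructure E) (Q R : E ⥤ E) (r : 𝟭 E ⟶ R) (P : E → Prop)
    (hr : ∀ X : E, MS.Cof (r.app X) ∧ MS.W (r.app X) ∧ MS.Fibrant (R.obj X)) where
  d : ObjectProperty.FullSubcategory P

variable (hr : ∀ X : E, MS.Cof (r.app X) ∧ MS.W (r.app X) ∧ MS.Fibrant (R.obj X))

/-- Hom-sets of the naive homotopy category: homotopy classes of maps between
bifibrant replacements. -/
def HoHom (A B : HoObj MS Q R r P hr) : Type v :=
  Quot (fun f g : (R.obj (Q.obj A.d.obj) ⟶ R.obj (Q.obj B.d.obj)) => LeftHomotopic MS f g)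

def hoIdMap (A : HoObj MS Q R r P hr) : HoHom MS Q R r P hr A A :=
  Quot.mk _ (𝟙 (R.obj (Q.obj A.d.obj)))

def hoCompMap {A B C₀ : HoObj MS Q R r P hr} (x : HoHom MS Q R r P hr A B)
    (y : HoHom MS Q R r P hr B C₀) : HoHom MS Q R r P hr A C₀ :=
  Quot.lift
    (fun f => Quot.lift (fun g => Quot.mk _ (f ≫ g))
      (fun g g' hg => Quot.sound (hg.precomp (hr (Q.obj C₀.d.obj)).2.2 f)) y)
    (fun f f' hf => by
      induction y using Quot.ind with
      | _ g => exact Quot.sound (hf.postcomp g)) x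

instance hoCategory : Category.{v} (HoObj MS Q R r P hr) where
  Hom A B := HoHom MS Q R r P hr A B
  id A := hoIdMap MS Q R r P hr A
  comp x y := hoCompMap MS Q R r P hr x y
  id_comp := by
    intro A B x
    induction x using Quot.ind with
    | _ f => exact congrArg (Quot.mk _) (Category.id_comp f)
  comp_id := by
    intro A B x
    induction x using Quot.ind with
    | _ f => exact congrArg (Quot.mk _) (Category.comp_id f)
  assoc := by
    intro A B C₀ D₀ x y z
    induction x using Quot.ind with
    | _ f =>
      induction y using Quot.ind with
      | _ g =>
        induction z using Quot.ind with
        | _ h => exact congrArg (Quot.mk _) (Category.assoc f g h)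

lemma hoComp_mk {A B C₀ : HoObj MS Q R r P hr}
    (f : R.obj (Q.obj A.d.obj) ⟶ R.obj (Q.obj B.d.obj))
    (g : R.obj (Q.obj B.d.obj) ⟶ R.obj (Q.obj C₀.d.obj)) :
    ((Quot.mk _ f : A ⟶ B) ≫ (Quot.mk _ g : B ⟶ C₀)
      : A ⟶ C₀) = Quot.mk _ (f ≫ g) := rfl

lemma hoId (A : HoObj MS Q R r P hr) :
    (𝟙 A : HoHom MS Q R r P hr A A) = Quot.mk _ (𝟙 (R.obj (Q.obj A.d.obj))) := rfl

/-- The functor from the subcategory to the naive homotopy category. -/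
def hoF : ObjectProperty.FullSubcategory P ⥤ HoObj MS Q R r P hr where
  obj d := ⟨d⟩
  map {A B} u := Quot.mk _ (R.map (Q.map u.hom))
  map_id A := by
    have key : R.map (Q.map (𝟙 A.obj)) = 𝟙 (R.obj (Q.obj A.obj)) := by simp
    exact congrArg (Quot.mk _) key
  map_comp {A B C₀} u v := by
    have key : R.map (Q.map (u ≫ v).hom)
        = R.map (Q.map u.hom) ≫ R.map (Q.map v.hom) := by
      rw [ObjectProperty.FullSubcategory.comp_hom, Q.map_comp, R.map_comp]
    exact congrArg (Quot.mk _) key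

lemma hoF_map {A B : ObjectProperty.FullSubcategory P} (u : A ⟶ B) :
    (hoF MS Q R r P hr).map u = Quot.mk _ (R.map (Q.map u.hom)) := rfl

lemma w_Qmap (hq : ∀ X : E, MS.Fib (q.app X) ∧ MS.W (q.app X) ∧ MS.Cofibrant (Q.obj X))
    {A B : E} {w : A ⟶ B} (hw : MS.W w) : MS.W (Q.map w) := by
  apply MS.w_cancel_right _ _ (hq B).2.1
  rw [q.naturality w]
  exact MS.w_comp _ _ (hq A).2.1 hw

lemma w_RQmap (hq : ∀ X : E, MS.Fib (q.app X) ∧ MS.W (q.app X) ∧ MS.Cofibrant (Q.obj X))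
    (hr : ∀ X : E, MS.Cof (r.app X) ∧ MS.W (r.app X) ∧ MS.Fibrant (R.obj X))
    {A B : E} {w : A ⟶ B} (hw : MS.W w) : MS.W (R.map (Q.map w)) := by
  apply MS.w_cancel_left (r.app (Q.obj A)) _ (hr (Q.obj A)).2.1
  rw [← r.naturality (Q.map w)]
  exact MS.w_comp _ _ (w_Qmap MS Q q hq hw) (hr (Q.obj B)).2.1

lemma hoF_inverts (hq : ∀ X : E, MS.Fib (q.app X) ∧ MS.W (q.app X) ∧ MS.Cofibrant (Q.obj X)) :
    (subW MS P).IsInvertedBy (hoF MS Q R r P hr) := by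
  intro A B w hw
  have hv : MS.W (R.map (Q.map w.hom)) := w_RQmap MS Q R q r hq hr hw
  have hSc : MS.Cofibrant (R.obj (Q.obj A.obj)) :=
    MS.cofibrant_of_cof (hr (Q.obj A.obj)).1 (hq A.obj).2.2
  have hTc : MS.Cofibrant (R.obj (Q.obj B.obj)) :=
    MS.cofibrant_of_cof (hr (Q.obj B.obj)).1 (hq B.obj).2.2
  obtain ⟨w₁, hw₁, hw₂⟩ := whitehead hSc (hr (Q.obj A.obj)).2.2 hTc
    (hr (Q.obj B.obj)).2.2 hv
  exact ⟨⟨Quot.mk _ w₁, Quot.sound hw₁, Quot.sound hw₂⟩⟩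

/-- The hom-level comparison map to the localization. -/
noncomputable def hoGmap
    (hq : ∀ X : E, MS.Fib (q.app X) ∧ MS.W (q.app X) ∧ MS.Cofibrant (Q.obj X))
    (hPQ : ∀ X : E, P X → P (Q.obj X)) (hPR : ∀ X : E, P X → P (R.obj X))
    (hcyl : ∀ X : E, P X → ∃ cyl : CylObj MS X, P cyl.I)
    {A B : HoObj MS Q R r P hr} (x : HoHom MS Q R r P hr A B) :
    (subW MS P).Q.obj ⟨A.d.obj, A.d.property⟩ ⟶ (subW MS P).Q.obj ⟨B.d.obj, B.d.property⟩ :=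
  Quot.lift (fun h =>
      (Localization.isoOfHom (subW MS P).Q (subW MS P)
          (dHom P (hPQ _ A.d.property) A.d.property (q.app A.d.obj)) (hq A.d.obj).2.1).inv ≫
      (subW MS P).Q.map
        (dHom P (hPQ _ A.d.property) (hPR _ (hPQ _ A.d.property)) (r.app (Q.obj A.d.obj))) ≫
      (subW MS P).Q.map
        (dHom P (hPR _ (hPQ _ A.d.property)) (hPR _ (hPQ _ B.d.property)) h) ≫
      (Localization.isoOfHom (subW MS P).Q (subW MS P)
          (dHom P (hPQ _ B.d.property) (hPR _ (hPQ _ B.d.property)) (r.app (Q.obj B.d.obj)))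
          (hr (Q.obj B.d.obj)).2.1).inv ≫
      (subW MS P).Q.map (dHom P (hPQ _ B.d.property) B.d.property (q.app B.d.obj)))
    (fun h h' hh => by
      rw [locQ_map_eq_of_homotopy MS P hcyl (hPR _ (hPQ _ A.d.property))
        (hPR _ (hPQ _ B.d.property)) (hr (Q.obj B.d.obj)).2.2 hh]) x

lemma hoGmap_mk
    (hq : ∀ X : E, MS.Fib (q.app X) ∧ MS.W (q.app X) ∧ MS.Cofibrant (Q.obj X))
    (hPQ : ∀ X : E, P X → P (Q.obj X)) (hPR : ∀ X : E, P X → P (R.obj X))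
    (hcyl : ∀ X : E, P X → ∃ cyl : CylObj MS X, P cyl.I)
    {A B : HoObj MS Q R r P hr} (h : R.obj (Q.obj A.d.obj) ⟶ R.obj (Q.obj B.d.obj)) :
    hoGmap MS Q R q r P hr hq hPQ hPR hcyl (Quot.mk _ h : HoHom MS Q R r P hr A B) =
      (Localization.isoOfHom (subW MS P).Q (subW MS P)
          (dHom P (hPQ _ A.d.property) A.d.property (q.app A.d.obj)) (hq A.d.obj).2.1).inv ≫
      (subW MS P).Q.map
        (dHom P (hPQ _ A.d.property) (hPR _ (hPQ _ A.d.property)) (r.app (Q.obj A.d.obj))) ≫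
      (subW MS P).Q.map
        (dHom P (hPR _ (hPQ _ A.d.property)) (hPR _ (hPQ _ B.d.property)) h) ≫
      (Localization.isoOfHom (subW MS P).Q (subW MS P)
          (dHom P (hPQ _ B.d.property) (hPR _ (hPQ _ B.d.property)) (r.app (Q.obj B.d.obj)))
          (hr (Q.obj B.d.obj)).2.1).inv ≫
      (subW MS P).Q.map (dHom P (hPQ _ B.d.property) B.d.property (q.app B.d.obj)) := rfl

lemma hoGmap_mk'
    (hq : ∀ X : E, MS.Fib (q.app X) ∧ MS.W (q.app X) ∧ MS.Cofibrant (Q.obj X))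
    (hPQ : ∀ X : E, P X → P (Q.obj X)) (hPR : ∀ X : E, P X → P (R.obj X))
    (hcyl : ∀ X : E, P X → ∃ cyl : CylObj MS X, P cyl.I)
    (A B : ObjectProperty.FullSubcategory P) (h : R.obj (Q.obj A.obj) ⟶ R.obj (Q.obj B.obj)) :
    hoGmap MS Q R q r P hr hq hPQ hPR hcyl
        (Quot.mk _ h : HoHom MS Q R r P hr ⟨A⟩ ⟨B⟩) =
      (Localization.isoOfHom (subW MS P).Q (subW MS P)
          (dHom P (hPQ _ A.property) A.property (q.app A.obj)) (hq A.obj).2.1).inv ≫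
      (subW MS P).Q.map
        (dHom P (hPQ _ A.property) (hPR _ (hPQ _ A.property)) (r.app (Q.obj A.obj))) ≫
      (subW MS P).Q.map
        (dHom P (hPR _ (hPQ _ A.property)) (hPR _ (hPQ _ B.property)) h) ≫
      (Localization.isoOfHom (subW MS P).Q (subW MS P)
          (dHom P (hPQ _ B.property) (hPR _ (hPQ _ B.property)) (r.app (Q.obj B.obj)))
          (hr (Q.obj B.obj)).2.1).inv ≫
      (subW MS P).Q.map (dHom P (hPQ _ B.property) B.property (q.app B.obj)) := rfl

/-- The comparison functor from the naive homotopy category to the localization. -/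
noncomputable def hoG
    (hq : ∀ X : E, MS.Fib (q.app X) ∧ MS.W (q.app X) ∧ MS.Cofibrant (Q.obj X))
    (hPQ : ∀ X : E, P X → P (Q.obj X)) (hPR : ∀ X : E, P X → P (R.obj X))
    (hcyl : ∀ X : E, P X → ∃ cyl : CylObj MS X, P cyl.I) :
    HoObj MS Q R r P hr ⥤ (subW MS P).Localization where
  obj A := (subW MS P).Q.obj ⟨A.d.obj, A.d.property⟩
  map {A B} x := hoGmap MS Q R q r P hr hq hPQ hPR hcyl x
  map_id A := by
    rw [hoId]
    simp only [hoGmap_mk]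
    have hid : (subW MS P).Q.map
        (dHom P (hPR _ (hPQ _ A.d.property)) (hPR _ (hPQ _ A.d.property))
          (𝟙 (R.obj (Q.obj A.d.obj)))) = 𝟙 _ := by
      rw [dHom_id, (subW MS P).Q.map_id]
    rw [hid]
    simp only [Category.id_comp]
    erw [Localization.isoOfHom_hom_inv_id_assoc, Localization.isoOfHom_inv_hom_id]
  map_comp {A B C₀} x y := by
    induction x using Quot.ind with
    | _ h =>
      induction y using Quot.ind with
      | _ h' =>
        rw [hoComp_mk MS Q R r P hr (A := A) (B := B) (C₀ := C₀) h h']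
        simp only [hoGmap_mk]
        have hsplit : (subW MS P).Q.map
            (dHom P (hPR _ (hPQ _ A.d.property)) (hPR _ (hPQ _ C₀.d.property)) (h ≫ h'))
            = (subW MS P).Q.map
                (dHom P (hPR _ (hPQ _ A.d.property)) (hPR _ (hPQ _ B.d.property)) h) ≫
              (subW MS P).Q.map
                (dHom P (hPR _ (hPQ _ B.d.property)) (hPR _ (hPQ _ C₀.d.property)) h') := by
          rw [← (subW MS P).Q.map_comp, dHom_comp]
        rw [hsplit]
        simp
        erw [Localization.isoOfHom_hom_inv_id_assoc, Localization.isoOfHom_inv_hom_id_assoc]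

end HoCategory
section FinalComparison

open CategoryTheory Limits Relation

variable {E : Type u} [Category.{v} E] [HasBinaryCoproducts E] [HasInitial E] [HasTerminal E]
variable (MS : ModelStructure E) (Q R : E ⥤ E) (q : Q ⟶ 𝟭 E) (r : 𝟭 E ⟶ R) (P : E → Prop)
variable (hr : ∀ X : E, MS.Cof (r.app X) ∧ MS.W (r.app X) ∧ MS.Fibrant (R.obj X))
variable (hq : ∀ X : E, MS.Fib (q.app X) ∧ MS.W (q.app X) ∧ MS.Cofibrant (Q.obj X))
variable (hPQ : ∀ X : E, P X → P (Q.obj X)) (hPR : ∀ X : E, P X → P (R.obj X))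
variable (hcyl : ∀ X : E, P X → ∃ cyl : CylObj MS X, P cyl.I)

lemma dHom_eval {X Y : E} (hX : P X) (hY : P Y) (f : X ⟶ Y) :
    (dHom P hX hY f).hom = f := rfl

lemma hoFG_map {A B : ObjectProperty.FullSubcategory P} (u : A ⟶ B) :
    hoGmap MS Q R q r P hr hq hPQ hPR hcyl ((hoF MS Q R r P hr).map u) =
      (subW MS P).Q.map u := by
  rw [hoF_map]
  show hoGmap MS Q R q r P hr hq hPQ hPR hcyl
      (Quot.mk _ (R.map (Q.map u.hom)) : HoHom MS Q R r P hr ⟨A⟩ ⟨B⟩) = (subW MS P).Q.map u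
  rw [hoGmap_mk']
  set L := (subW MS P).Q with hL
  have nat1 : dHom P (hPQ _ A.property) (hPR _ (hPQ _ A.property)) (r.app (Q.obj A.obj)) ≫
      dHom P (hPR _ (hPQ _ A.property)) (hPR _ (hPQ _ B.property)) (R.map (Q.map u.hom)) =
      dHom P (hPQ _ A.property) (hPQ _ B.property) (Q.map u.hom) ≫
      dHom P (hPQ _ B.property) (hPR _ (hPQ _ B.property)) (r.app (Q.obj B.obj)) := by
    rw [dHom_comp, dHom_comp]
    exact congrArg (dHom P _ _) (r.naturality (Q.map u.hom)).symm
  have e1 : L.map (dHom P (hPQ _ A.property) (hPR _ (hPQ _ A.property)) (r.app (Q.obj A.obj))) ≫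
      L.map (dHom P (hPR _ (hPQ _ A.property)) (hPR _ (hPQ _ B.property)) (R.map (Q.map u.hom))) =
      L.map (dHom P (hPQ _ A.property) (hPQ _ B.property) (Q.map u.hom)) ≫
      L.map (dHom P (hPQ _ B.property) (hPR _ (hPQ _ B.property)) (r.app (Q.obj B.obj))) := by
    rw [← L.map_comp, ← L.map_comp, nat1]
  rw [reassoc_of% e1]
  erw [Localization.isoOfHom_hom_inv_id_assoc]
  have nat2 : dHom P (hPQ _ A.property) (hPQ _ B.property) (Q.map u.hom) ≫
      dHom P (hPQ _ B.property) B.property (q.app B.obj) =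
      dHom P (hPQ _ A.property) A.property (q.app A.obj) ≫
      dHom P A.property B.property u.hom := by
    rw [dHom_comp, dHom_comp]
    exact congrArg (dHom P _ _) (q.naturality u.hom)
  rw [← L.map_comp, nat2, L.map_comp]
  erw [Localization.isoOfHom_inv_hom_id_assoc]
  rfl

lemma hoFG : hoF MS Q R r P hr ⋙ hoG MS Q R q r P hr hq hPQ hPR hcyl = (subW MS P).Q := by
  refine CategoryTheory.Functor.ext (fun A => rfl) ?_
  intro A B u
  have key := hoFG_map MS Q R q r P hr hq hPQ hPR hcyl u
  simp only [Functor.comp_map, eqToHom_refl, Category.comp_id, Category.id_comp]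
  exact key

/-- The lifted functor from the localization to the naive homotopy category. -/
noncomputable def hoFhat : (subW MS P).Localization ⥤ HoObj MS Q R r P hr :=
  Localization.Construction.lift (hoF MS Q R r P hr) (hoF_inverts MS Q R q r P hr hq)

lemma hoFhat_map {A B : ObjectProperty.FullSubcategory P} (u : A ⟶ B) :
    (hoFhat MS Q R q r P hr hq).map ((subW MS P).Q.map u) = (hoF MS Q R r P hr).map u := by
  exact eq_of_heq (Functor.hcongr_hom
    (Localization.Construction.fac (hoF MS Q R r P hr) (hoF_inverts MS Q R q r P hr hq)) u)

lemma hoKey : hoFhat MS Q R q r P hr hq ⋙ hoG MS Q R q r P hr hq hPQ hPR hcyl =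
    𝟭 ((subW MS P).Localization) := by
  apply Localization.Construction.uniq
  rw [← Functor.assoc, hoFhat, Localization.Construction.fac,
    hoFG MS Q R q r P hr hq hPQ hPR hcyl, Functor.comp_id]

end FinalComparison

/-- `f ↦ L(r_Y)⁻¹ ∘ L(f) ∘ L(q_X)⁻¹` induces a bijection
`Hom_D(QX, RY)/∼ ≅ Hom_{D[W_D⁻¹]}(X, Y)`, where `∼` is left homotopy. -/
theorem locRep_bijective_on_homotopy_classes
    {E : Type u} [Category.{v} E] [HasBinaryCoproducts E] [HasInitial E] [HasTerminal E]
    (MS : ModelStructure E)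
    (Q R : E ⥤ E) (q : Q ⟶ 𝟭 E) (r : 𝟭 E ⟶ R)
    (hq : ∀ X : E, MS.Fib (q.app X) ∧ MS.W (q.app X) ∧ MS.Cofibrant (Q.obj X))
    (hr : ∀ X : E, MS.Cof (r.app X) ∧ MS.W (r.app X) ∧ MS.Fibrant (R.obj X))
    (P : E → Prop)
    (hPQ : ∀ X : E, P X → P (Q.obj X)) (hPR : ∀ X : E, P X → P (R.obj X))
    (hcyl : ∀ X : E, P X → ∃ cyl : CylObj MS X, P cyl.I)
    (X Y : E) (hX : P X) (hY : P Y) :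
    (∀ f g : Q.obj X ⟶ R.obj Y,
        locRep MS P (hPQ X hX) hX (hPR Y hY) hY
            (q.app X) (hq X).2.1 (r.app Y) (hr Y).2.1 f =
          locRep MS P (hPQ X hX) hX (hPR Y hY) hY
            (q.app X) (hq X).2.1 (r.app Y) (hr Y).2.1 g ↔
        LeftHomotopic MS f g) ∧
    Function.Surjective
      (fun f : Q.obj X ⟶ R.obj Y =>
        locRep MS P (hPQ X hX) hX (hPR Y hY) hY
          (q.app X) (hq X).2.1 (r.app Y) (hr Y).2.1 f) := by
  classical
  have e : ∀ m : Q.obj X ⟶ R.obj Y,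
      locRep MS P (hPQ X hX) hX (hPR Y hY) hY (q.app X) (hq X).2.1 (r.app Y) (hr Y).2.1 m =
      (Localization.isoOfHom (subW MS P).Q (subW MS P)
          (dHom P (hPQ X hX) hX (q.app X)) (hq X).2.1).inv ≫
        (subW MS P).Q.map (dHom P (hPQ X hX) (hPR Y hY) m) ≫
        (Localization.isoOfHom (subW MS P).Q (subW MS P)
          (dHom P hY (hPR Y hY) (r.app Y)) (hr Y).2.1).inv := fun m => rfl
  constructor
  · intro f g
    constructor
    · -- locRep equal → homotopic
      intro hfg
      rw [e f, e g] at hfg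
      have h1 := (cancel_epi (Localization.isoOfHom (subW MS P).Q (subW MS P)
          (dHom P (hPQ X hX) hX (q.app X)) (hq X).2.1).inv).1 hfg
      have hLfg := (cancel_mono (Localization.isoOfHom (subW MS P).Q (subW MS P)
          (dHom P hY (hPR Y hY) (r.app Y)) (hr Y).2.1).inv).1 h1
      have hF := congrArg (hoFhat MS Q R q r P hr hq).map hLfg
      rw [hoFhat_map MS Q R q r P hr hq, hoFhat_map MS Q R q r P hr hq] at hF
      rw [hoF_map, hoF_map] at hF
      rw [dHom_eval P (hPQ X hX) (hPR Y hY) f, dHom_eval P (hPQ X hX) (hPR Y hY) g] at hF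
      have hEq : Relation.EqvGen
          (fun a b : (R.obj (Q.obj (Q.obj X)) ⟶ R.obj (Q.obj (R.obj Y))) =>
          LeftHomotopic MS a b) (R.map (Q.map f)) (R.map (Q.map g)) := Quot.eqvGen_exact hF
      have hequiv : Equivalence (fun a b : (R.obj (Q.obj (Q.obj X)) ⟶ R.obj (Q.obj (R.obj Y))) =>
          LeftHomotopic MS a b) := by
        constructor
        · exact fun a => leftHomotopic_refl a
        · exact fun h => h.symm
        · exact fun h1 h2 => leftHomotopic_trans
            (MS.cofibrant_of_cof (hr (Q.obj (Q.obj X))).1 (hq (Q.obj X)).2.2)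
            (hr (Q.obj (Q.obj X))).2.2 (hr (Q.obj (R.obj Y))).2.2 h1 h2
      have hRQ : LeftHomotopic MS (R.map (Q.map f)) (R.map (Q.map g)) :=
        hequiv.eqvGen_iff.mp hEq
      obtain ⟨s, hs⟩ := MS.exists_lift_cofibrant (hq X).2.2 (hq (Q.obj X)).1
        (hq (Q.obj X)).2.1 (𝟙 (Q.obj X))
      obtain ⟨ρY, hρY⟩ := MS.exists_ext (hr Y).2.2 (hr (R.obj Y)).1 (hr (R.obj Y)).2.1
        (𝟙 (R.obj Y))
      have hconj : ∀ m : Q.obj X ⟶ R.obj Y,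
          ((s ≫ r.app (Q.obj (Q.obj X))) ≫ R.map (Q.map m)) ≫
            (R.map (q.app (R.obj Y)) ≫ ρY) = m := by
        intro m
        simp only [Category.assoc]
        rw [← NatTrans.naturality_assoc r (Q.map m)]
        rw [← NatTrans.naturality_assoc r (q.app (R.obj Y))]
        simp only [Functor.id_obj, Functor.id_map]
        rw [hρY]
        simp only [Category.comp_id]
        rw [q.naturality m]
        simp only [Functor.id_map]
        rw [reassoc_of% hs]
      have h1' := hRQ.precomp (hr (Q.obj (R.obj Y))).2.2 (s ≫ r.app (Q.obj (Q.obj X)))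
      have h2' := h1'.postcomp (R.map (q.app (R.obj Y)) ≫ ρY)
      rw [hconj f, hconj g] at h2'
      exact h2'
    · -- homotopic → locRep equal
      intro hfg
      have hL := locQ_map_eq_of_homotopy MS P hcyl (hPQ X hX) (hPR Y hY) (hr Y).2.2 hfg
      rw [e f, e g, hL]
  · -- surjectivity
    intro φ
    have hφ := eq_of_heq (Functor.hcongr_hom (hoKey MS Q R q r P hr hq hPQ hPR hcyl) φ)
    simp only [Functor.comp_map, Functor.id_map, eqToHom_refl, Category.comp_id,
      Category.id_comp] at hφ
    obtain ⟨h, hrep⟩ := Quot.exists_rep ((hoFhat MS Q R q r P hr hq).map φ)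
    refine ⟨r.app (Q.obj X) ≫ h ≫ R.map (q.app Y), ?_⟩
    dsimp only
    rw [e (r.app (Q.obj X) ≫ h ≫ R.map (q.app Y))]
    rw [← hφ]
    conv_rhs => rw [← hrep]
    show _ = hoGmap MS Q R q r P hr hq hPQ hPR hcyl
      (Quot.mk _ h : HoHom MS Q R r P hr ⟨⟨X, hX⟩⟩ ⟨⟨Y, hY⟩⟩)
    rw [hoGmap_mk' MS Q R q r P hr hq hPQ hPR hcyl ⟨X, hX⟩ ⟨Y, hY⟩ h]
    have hsplit : dHom P (hPQ X hX) (hPR Y hY) (r.app (Q.obj X) ≫ h ≫ R.map (q.app Y)) =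
        dHom P (hPQ X hX) (hPR _ (hPQ X hX)) (r.app (Q.obj X)) ≫
        dHom P (hPR _ (hPQ X hX)) (hPR _ (hPQ Y hY)) h ≫
        dHom P (hPR _ (hPQ Y hY)) (hPR Y hY) (R.map (q.app Y)) := by
      rfl
    rw [hsplit, (subW MS P).Q.map_comp, (subW MS P).Q.map_comp]
    have nat : dHom P (hPQ Y hY) (hPR _ (hPQ Y hY)) (r.app (Q.obj Y)) ≫
        dHom P (hPR _ (hPQ Y hY)) (hPR Y hY) (R.map (q.app Y)) =
        dHom P (hPQ Y hY) hY (q.app Y) ≫ dHom P hY (hPR Y hY) (r.app Y) := by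
      rw [dHom_comp, dHom_comp]
      exact congrArg (dHom P _ _) (r.naturality (q.app Y)).symm
    have key2 : (subW MS P).Q.map
          (dHom P (hPR _ (hPQ Y hY)) (hPR Y hY) (R.map (q.app Y))) ≫
        (Localization.isoOfHom (subW MS P).Q (subW MS P)
          (dHom P hY (hPR Y hY) (r.app Y)) (hr Y).2.1).inv =
        (Localization.isoOfHom (subW MS P).Q (subW MS P)
          (dHom P (hPQ Y hY) (hPR _ (hPQ Y hY)) (r.app (Q.obj Y))) (hr (Q.obj Y)).2.1).inv ≫
        (subW MS P).Q.map (dHom P (hPQ Y hY) hY (q.app Y)) := by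
      rw [← cancel_epi (Localization.isoOfHom (subW MS P).Q (subW MS P)
        (dHom P (hPQ Y hY) (hPR _ (hPQ Y hY)) (r.app (Q.obj Y))) (hr (Q.obj Y)).2.1).hom]
      erw [Localization.isoOfHom_hom]
      erw [Localization.isoOfHom_hom_inv_id_assoc]
      erw [← Category.assoc, ← (subW MS P).Q.map_comp, nat, (subW MS P).Q.map_comp,
        Category.assoc, Localization.isoOfHom_hom_inv_id, Category.comp_id]
    simp only [Category.assoc]
    rw [key2]
end

section
/- Let E be a model category with functorial factorizations giving a cofibrant replacement functor Q (with a natural trivial fibration q_X : QX → X, QX cofibrant) and a fibrant replacement functor R (with a natural trivial cofibration r_X : X → RX, RX fibrant). Let D ⊆ E be a full subcategory closed under Q and R and such that every object of D admits a cylinder object belonging to D, and let W_D be the class of weak equivalences of E lying in D. If X, Y ∈ D are both fibrant and cofibrant, then the map Hom_D(X, Y) → Hom_{D[W_D⁻¹]}(X, Y), f ↦ L(f), induced by the canonical localization functor L : D → D[W_D⁻¹], is surjective. -/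
open CategoryTheory Limits

universe v u

variable {C : Type u} [Category.{v} C]

section Aux

variable {C' : Type u} [Category.{v} C'] (MS : ModelStructure C')

theorem aux_cof_comp {A B Z : C'} (f : A ⟶ B) (g : B ⟶ Z)
    (hf : MS.Cof f) (hg : MS.Cof g) : MS.Cof (f ≫ g) := by
  obtain ⟨M, c, tf, hc, htf, hw, hfac⟩ := MS.factor_cof_trivFib (f ≫ g)
  haveI := MS.lift_cof_trivFib f tf hf htf hw
  haveI := MS.lift_cof_trivFib g tf hg htf hw
  have sq1 : CommSq c f tf g := ⟨by rw [hfac]⟩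
  have sq2 : CommSq sq1.lift g tf (𝟙 Z) := ⟨by rw [sq1.fac_right, Category.comp_id]⟩
  refine MS.cof_retract (f ≫ g) c ⟨𝟙 A, 𝟙 A, sq2.lift, tf, by simp, sq2.fac_right, ?_, ?_⟩ hc
  · rw [Category.id_comp, Category.assoc, sq2.fac_left, sq1.fac_left]
  · rw [Category.id_comp, hfac]

theorem aux_sec_of_trivFib [HasInitial C'] {Z T : C'} (p : Z ⟶ T)
    (hp : MS.Fib p) (hw : MS.W p) (hT : MS.Cofibrant T) :
    ∃ s : T ⟶ Z, s ≫ p = 𝟙 T := by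
  haveI := MS.lift_cof_trivFib (initial.to T) p hT hp hw
  have sq : CommSq (initial.to Z) (initial.to T) p (𝟙 T) :=
    ⟨by rw [initial.to_comp, Category.comp_id]⟩
  exact ⟨sq.lift, sq.fac_right⟩

theorem aux_ext_of_trivCof [HasTerminal C'] {A B F : C'} (i : A ⟶ B)
    (hc : MS.Cof i) (hw : MS.W i) (hF : MS.Fibrant F) (h : A ⟶ F) :
    ∃ t : B ⟶ F, i ≫ t = h := by
  haveI := MS.lift_trivCof_fib i (terminal.from F) hc hw hF
  have sq : CommSq h i (terminal.from F) (terminal.from B) :=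
    ⟨by rw [terminal.comp_from, terminal.comp_from]⟩
  exact ⟨sq.lift, sq.fac_left⟩

/-- Key lemma: a weak equivalence `u : S ⟶ T` with `S` fibrant and `T` cofibrant
admits a map `g : T ⟶ S` such that `u ≫ g` is homotopic to the identity via any
prescribed cylinder object of `S`. -/
theorem aux_key [HasBinaryCoproducts C'] [HasInitial C'] [HasTerminal C']
    {S T : C'} (u : S ⟶ T) (hu : MS.W u) (hS : MS.Fibrant S) (hT : MS.Cofibrant T)
    (cyl : CylObj MS S) :
    ∃ (g : T ⟶ S) (K : cyl.I ⟶ S), cyl.i₀ ≫ K = 𝟙 S ∧ cyl.i₁ ≫ K = u ≫ g := by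
  obtain ⟨Z, i, p, hic, hiw, hpf, hfac⟩ := MS.factor_trivCof_fib u
  have hpw : MS.W p := MS.w_cancel_left i p hiw (by rw [hfac]; exact hu)
  obtain ⟨rr, hrr⟩ := aux_ext_of_trivCof MS i hic hiw hS (𝟙 S)
  obtain ⟨s, hs⟩ := aux_sec_of_trivFib MS p hpf hpw hT
  obtain ⟨CZ, c, πZ, hcc, hπf, hπw, hcfac⟩ :=
    MS.factor_cof_trivFib (coprod.desc (𝟙 Z) (𝟙 Z))
  have hj0 : (coprod.inl : Z ⟶ Z ⨿ Z) ≫ c ≫ πZ = 𝟙 Z := by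
    rw [← Category.assoc, ← coprod.inl_desc (𝟙 Z) (𝟙 Z), ← hcfac]
    simp
  have hj1 : (coprod.inr : Z ⟶ Z ⨿ Z) ≫ c ≫ πZ = 𝟙 Z := by
    rw [← Category.assoc, ← coprod.inr_desc (𝟙 Z) (𝟙 Z), ← hcfac]
    simp
  haveI := MS.lift_cof_trivFib c p hcc hpf hpw
  have sqH : CommSq (coprod.desc (𝟙 Z) (p ≫ s)) c p (πZ ≫ p) := by
    constructor
    rw [← Category.assoc, hcfac]
    apply coprod.hom_ext <;> simp [hs]
  haveI := MS.lift_cof_trivFib (coprod.desc cyl.i₀ cyl.i₁) πZ cyl.cof hπf hπw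
  have sqK : CommSq (coprod.desc (i ≫ coprod.inl ≫ c) (i ≫ coprod.inr ≫ c))
      (coprod.desc cyl.i₀ cyl.i₁) πZ (cyl.π ≫ i) := by
    constructor
    apply coprod.hom_ext <;>
      simp [hj0, hj1, reassoc_of% cyl.h₀, reassoc_of% cyl.h₁]
  have h0 : cyl.i₀ ≫ sqK.lift = i ≫ coprod.inl ≫ c := by
    calc cyl.i₀ ≫ sqK.lift
        = (coprod.inl ≫ coprod.desc cyl.i₀ cyl.i₁) ≫ sqK.lift := by rw [coprod.inl_desc]
      _ = coprod.inl ≫ coprod.desc (i ≫ coprod.inl ≫ c) (i ≫ coprod.inr ≫ c) := by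
          rw [Category.assoc, sqK.fac_left]
      _ = i ≫ coprod.inl ≫ c := by rw [coprod.inl_desc]
  have h1 : cyl.i₁ ≫ sqK.lift = i ≫ coprod.inr ≫ c := by
    calc cyl.i₁ ≫ sqK.lift
        = (coprod.inr ≫ coprod.desc cyl.i₀ cyl.i₁) ≫ sqK.lift := by rw [coprod.inr_desc]
      _ = coprod.inr ≫ coprod.desc (i ≫ coprod.inl ≫ c) (i ≫ coprod.inr ≫ c) := by
          rw [Category.assoc, sqK.fac_left]
      _ = i ≫ coprod.inr ≫ c := by rw [coprod.inr_desc]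
  have hH0 : coprod.inl ≫ c ≫ sqH.lift = 𝟙 Z := by
    rw [sqH.fac_left, coprod.inl_desc]
  have hH1 : coprod.inr ≫ c ≫ sqH.lift = p ≫ s := by
    rw [sqH.fac_left, coprod.inr_desc]
  refine ⟨s ≫ rr, sqK.lift ≫ sqH.lift ≫ rr, ?_, ?_⟩
  · calc cyl.i₀ ≫ sqK.lift ≫ sqH.lift ≫ rr
        = (cyl.i₀ ≫ sqK.lift) ≫ sqH.lift ≫ rr := by simp only [Category.assoc]
      _ = i ≫ (coprod.inl ≫ c ≫ sqH.lift) ≫ rr := by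
          rw [h0]; simp only [Category.assoc]
      _ = i ≫ rr := by rw [hH0, Category.id_comp]
      _ = 𝟙 S := hrr
  · calc cyl.i₁ ≫ sqK.lift ≫ sqH.lift ≫ rr
        = (cyl.i₁ ≫ sqK.lift) ≫ sqH.lift ≫ rr := by simp only [Category.assoc]
      _ = i ≫ (coprod.inr ≫ c ≫ sqH.lift) ≫ rr := by
          rw [h1]; simp only [Category.assoc]
      _ = i ≫ (p ≫ s) ≫ rr := by rw [hH1]
      _ = u ≫ s ≫ rr := by rw [← hfac]; simp only [Category.assoc]

end Aux

/-- for `X, Y` fibrant-cofibrant objects of a full subcategory `D` closed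
under (co)fibrant replacement and admitting cylinders, the canonical localization
functor `L : D → D[W_D⁻¹]` is surjective on morphisms from `X` to `Y`. -/
theorem localization_surjective_on_fibrant_cofibrant
    {E : Type u} [Category.{v} E] [HasBinaryCoproducts E] [HasInitial E] [HasTerminal E]
    (MS : ModelStructure E)
    (Q R : E ⥤ E) (q : Q ⟶ 𝟭 E) (r : 𝟭 E ⟶ R)
    (hq : ∀ X : E, MS.Fib (q.app X) ∧ MS.W (q.app X) ∧ MS.Cofibrant (Q.obj X))
    (hr : ∀ X : E, MS.Cof (r.app X) ∧ MS.W (r.app X) ∧ MS.Fibrant (R.obj X))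
    (P : E → Prop)
    (hPQ : ∀ X : E, P X → P (Q.obj X)) (hPR : ∀ X : E, P X → P (R.obj X))
    (hcyl : ∀ X : E, P X → ∃ cyl : CylObj MS X, P cyl.I)
    {X Y : E} (hX : P X) (hY : P Y)
    (hXf : MS.Fibrant X) (hXc : MS.Cofibrant X)
    (hYf : MS.Fibrant Y) (hYc : MS.Cofibrant Y) :
    Function.Surjective
      (fun f : ((⟨X, hX⟩ : ObjectProperty.FullSubcategory P) ⟶ ⟨Y, hY⟩) => (subW MS P).Q.map f) := by
  intro φ
  let D := ObjectProperty.FullSubcategory P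
  let W' := subW MS P
  let L := W'.Q
  -- object-level replacement data
  let QD : D → D := fun d => ⟨Q.obj d.obj, hPQ _ d.2⟩
  let RQ : D → D := fun d => ⟨R.obj (Q.obj d.obj), hPR _ (hPQ _ d.2)⟩
  let qm : ∀ d : D, QD d ⟶ d := fun d => ObjectProperty.homMk (q.app d.obj)
  let rm : ∀ d : D, QD d ⟶ RQ d := fun d => ObjectProperty.homMk (r.app (Q.obj d.obj))
  have iq : ∀ d, IsIso (L.map (qm d)) := fun d => W'.Q_inverts _ (hq d.obj).2.1
  have ir : ∀ d, IsIso (L.map (rm d)) := fun d => W'.Q_inverts _ (hr (Q.obj d.obj)).2.1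
  let ρh : ∀ d : D, L.obj d ⟶ L.obj (RQ d) := fun d =>
    haveI := iq d
    inv (L.map (qm d)) ≫ L.map (rm d)
  let ρi : ∀ d : D, L.obj (RQ d) ⟶ L.obj d := fun d =>
    haveI := ir d
    inv (L.map (rm d)) ≫ L.map (qm d)
  have hρh : ∀ d, ρh d = haveI := iq d; inv (L.map (qm d)) ≫ L.map (rm d) := fun _ => rfl
  have hρi : ∀ d, ρi d = haveI := ir d; inv (L.map (rm d)) ≫ L.map (qm d) := fun _ => rfl
  have hρhi : ∀ d, ρh d ≫ ρi d = 𝟙 (L.obj d) := by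
    intro d
    haveI := iq d; haveI := ir d
    rw [hρh, hρi]
    simp only [Category.assoc, IsIso.hom_inv_id_assoc, IsIso.inv_hom_id, Category.comp_id]
  have hρih : ∀ d, ρi d ≫ ρh d = 𝟙 (L.obj (RQ d)) := by
    intro d
    haveI := iq d; haveI := ir d
    rw [hρh, hρi]
    simp only [Category.assoc, IsIso.hom_inv_id_assoc, IsIso.inv_hom_id, Category.comp_id]
  -- the conjugation formula
  have hconj : ∀ {a b : D} (u : a ⟶ b),
      L.map u = ρh a ≫ L.map (ObjectProperty.homMk (R.map (Q.map u.hom)) : RQ a ⟶ RQ b) ≫ ρi b := by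
    intro a b u
    haveI := iq a; haveI := ir b
    have e1 : L.map (rm a) ≫ L.map (ObjectProperty.homMk (R.map (Q.map u.hom)) : RQ a ⟶ RQ b)
        = L.map (ObjectProperty.homMk (Q.map u.hom) : QD a ⟶ QD b) ≫ L.map (rm b) := by
      rw [← L.map_comp, ← L.map_comp]
      congr 1
      exact ObjectProperty.hom_ext _ (r.naturality (Q.map u.hom)).symm
    have e2 : L.map (ObjectProperty.homMk (Q.map u.hom) : QD a ⟶ QD b) ≫ L.map (qm b)
        = L.map (qm a) ≫ L.map u := by
      rw [← L.map_comp, ← L.map_comp]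
      congr 1
      exact ObjectProperty.hom_ext _ (q.naturality u.hom)
    rw [hρh, hρi]
    calc L.map u = inv (L.map (qm a)) ≫ L.map (qm a) ≫ L.map u := by
          rw [IsIso.inv_hom_id_assoc]
      _ = inv (L.map (qm a)) ≫ L.map (ObjectProperty.homMk (Q.map u.hom) : QD a ⟶ QD b) ≫ L.map (qm b) := by rw [e2]
      _ = inv (L.map (qm a)) ≫ (L.map (ObjectProperty.homMk (Q.map u.hom) : QD a ⟶ QD b) ≫ L.map (rm b))
            ≫ inv (L.map (rm b)) ≫ L.map (qm b) := by
          simp only [Category.assoc, IsIso.hom_inv_id_assoc]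
      _ = inv (L.map (qm a)) ≫ (L.map (rm a)
            ≫ L.map (ObjectProperty.homMk (R.map (Q.map u.hom)) : RQ a ⟶ RQ b))
            ≫ inv (L.map (rm b)) ≫ L.map (qm b) := by rw [e1]
      _ = (inv (L.map (qm a)) ≫ L.map (rm a))
            ≫ L.map (ObjectProperty.homMk (R.map (Q.map u.hom)) : RQ a ⟶ RQ b)
            ≫ inv (L.map (rm b)) ≫ L.map (qm b) := by
          simp only [Category.assoc]
  -- the morphism property
  let e := Localization.Construction.objEquiv W'
  have hsym : ∀ d : D, e.symm (W'.Q.obj d) = d := fun _ => rfl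
  let MyP : MorphismProperty W'.Localization := fun A B φ =>
    ∃ f : RQ (e.symm A) ⟶ RQ (e.symm B),
      φ = ρh (e.symm A) ≫ L.map f ≫ ρi (e.symm B)
  haveI : MyP.IsStableUnderComposition := by
    constructor
    rintro A B C' φ ψ ⟨f, hf⟩ ⟨g, hg⟩
    refine ⟨f ≫ g, ?_⟩
    have key : (ρh (e.symm A) ≫ L.map f ≫ ρi (e.symm B)) ≫ (ρh (e.symm B) ≫ L.map g ≫ ρi (e.symm C'))
        = ρh (e.symm A) ≫ L.map (f ≫ g) ≫ ρi (e.symm C') := by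
      rw [L.map_comp]
      simp only [Category.assoc]
      rw [← Category.assoc (ρi (e.symm B)), hρih]
      simp only [Category.id_comp]
    rw [hf, hg]
    exact key
  have hgen : ∀ ⦃a b : D⦄ (u : a ⟶ b), MyP (L.map u) := by
    intro a b u
    exact ⟨ObjectProperty.homMk (R.map (Q.map u.hom)), hconj u⟩
  have hinvP : ∀ ⦃a b : D⦄ (w : a ⟶ b) (hw : W' w),
      MyP (Localization.Construction.wInv w hw) := by
    intro a b w hw
    -- RQ w is a weak equivalence between a fibrant and a cofibrant object
    have hQw : MS.W (Q.map w.hom) := by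
      refine MS.w_cancel_right _ (q.app b.obj) (hq b.obj).2.1 ?_
      rw [q.naturality w.hom]
      exact MS.w_comp _ _ (hq a.obj).2.1 hw
    have hRQw : MS.W (R.map (Q.map w.hom)) := by
      refine MS.w_cancel_left (r.app (Q.obj a.obj)) _ (hr (Q.obj a.obj)).2.1 ?_
      rw [← r.naturality (Q.map w.hom)]
      exact MS.w_comp _ _ hQw (hr (Q.obj b.obj)).2.1
    have hSf : MS.Fibrant (R.obj (Q.obj a.obj)) := (hr (Q.obj a.obj)).2.2
    have hTc : MS.Cofibrant (R.obj (Q.obj b.obj)) := by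
      show MS.Cof (initial.to _)
      rw [show initial.to (R.obj (Q.obj b.obj))
          = initial.to (Q.obj b.obj) ≫ r.app (Q.obj b.obj) from (initial.to_comp _).symm]
      exact aux_cof_comp MS _ _ ((hq b.obj).2.2) ((hr (Q.obj b.obj)).1)
    obtain ⟨cylS, hcylI⟩ := hcyl (R.obj (Q.obj a.obj)) (hPR _ (hPQ _ a.2))
    obtain ⟨g, K, hK0, hK1⟩ := aux_key MS (R.map (Q.map w.hom)) hRQw hSf hTc cylS
    -- now pass to the localization
    let Icyl : D := ⟨cylS.I, hcylI⟩
    let π' : Icyl ⟶ RQ a := ObjectProperty.homMk cylS.π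
    let i₀' : RQ a ⟶ Icyl := ObjectProperty.homMk cylS.i₀
    let i₁' : RQ a ⟶ Icyl := ObjectProperty.homMk cylS.i₁
    let K' : Icyl ⟶ RQ a := ObjectProperty.homMk K
    let g' : RQ b ⟶ RQ a := ObjectProperty.homMk g
    let u' : RQ a ⟶ RQ b := ObjectProperty.homMk (R.map (Q.map w.hom))
    haveI hπI : IsIso (L.map π') :=
      W'.Q_inverts (X := Icyl) (Y := RQ a) π' cylS.we
    have e0 : L.map i₀' ≫ L.map π' = 𝟙 _ := by
      rw [← L.map_comp, show (i₀' ≫ π') = 𝟙 (RQ a) from ObjectProperty.hom_ext _ cylS.h₀, L.map_id]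
    have e1 : L.map i₁' ≫ L.map π' = 𝟙 _ := by
      rw [← L.map_comp, show (i₁' ≫ π') = 𝟙 (RQ a) from ObjectProperty.hom_ext _ cylS.h₁, L.map_id]
    have hi01 : L.map i₀' = L.map i₁' := by
      rw [IsIso.eq_inv_of_inv_hom_id e0, IsIso.eq_inv_of_inv_hom_id e1]
    have hug : L.map u' ≫ L.map g' = 𝟙 (L.obj (RQ a)) := by
      rw [← L.map_comp, show (u' ≫ g') = (i₁' ≫ K') from ObjectProperty.hom_ext _ hK1.symm,
        L.map_comp, ← hi01, ← L.map_comp,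
        show (i₀' ≫ K') = 𝟙 (RQ a) from ObjectProperty.hom_ext _ hK0, L.map_id]
    haveI hLu' : IsIso (L.map u') :=
      W'.Q_inverts (X := RQ a) (Y := RQ b) u' hRQw
    haveI hLw : IsIso (L.map w) := W'.Q_inverts _ hw
    have hLg : L.map g' = inv (L.map u') :=
      IsIso.eq_inv_of_hom_inv_id hug
    refine ⟨g', ?_⟩
    have hwinv : Localization.Construction.wInv w hw = inv (L.map w) :=
      IsIso.eq_inv_of_hom_inv_id
        (show L.map w ≫ _ = 𝟙 _ from (Localization.Construction.wIso w hw).hom_inv_id)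
    rw [hwinv]
    symm
    refine @IsIso.eq_inv_of_hom_inv_id _ _ _ _ _ hLw _ ?_
    show L.map w ≫ ρh b ≫ L.map g' ≫ ρi a = 𝟙 (L.obj a)
    rw [hconj w, show (ObjectProperty.homMk (R.map (Q.map w.hom)) : RQ a ⟶ RQ b) = u' from rfl, hLg]
    simp only [Category.assoc]
    rw [← Category.assoc (ρi b), hρih]
    simp only [Category.id_comp, IsIso.hom_inv_id_assoc, hρhi]
  have htop := Localization.Construction.morphismProperty_eq_top MyP hgen hinvP
  have hφ : MyP φ := by rw [htop]; exact MorphismProperty.top_apply φ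
  obtain ⟨f, hf⟩ := hφ
  -- build the actual morphism X ⟶ Y
  obtain ⟨s, hs⟩ := aux_sec_of_trivFib MS (q.app X) (hq X).1 (hq X).2.1 hXc
  obtain ⟨t, ht⟩ := aux_ext_of_trivCof MS (r.app (Q.obj Y)) ((hr (Q.obj Y)).1)
    ((hr (Q.obj Y)).2.1) hYf (q.app Y)
  let x : D := ⟨X, hX⟩
  let y : D := ⟨Y, hY⟩
  refine ⟨((ObjectProperty.homMk s : x ⟶ QD x) ≫ rm x) ≫ (f : RQ x ⟶ RQ y) ≫ (ObjectProperty.homMk t : RQ y ⟶ y), ?_⟩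
  show L.map _ = φ
  haveI := iq x; haveI := ir y
  have hLs : L.map (ObjectProperty.homMk s : x ⟶ QD x) = inv (L.map (qm x)) := by
    apply IsIso.eq_inv_of_inv_hom_id
    rw [← L.map_comp]
    exact (congrArg L.map (show ((ObjectProperty.homMk s : x ⟶ QD x) ≫ qm x) = 𝟙 x from ObjectProperty.hom_ext _ hs)).trans
      (L.map_id x)
  have hLt : L.map (ObjectProperty.homMk t : RQ y ⟶ y) = inv (L.map (rm y)) ≫ L.map (qm y) := by
    rw [IsIso.eq_inv_comp, ← L.map_comp]
    congr 1
    exact ObjectProperty.hom_ext _ ht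
  let f' : RQ x ⟶ RQ y := f
  rw [hf]
  show L.map (((ObjectProperty.homMk s : x ⟶ QD x) ≫ rm x) ≫ f' ≫ (ObjectProperty.homMk t : RQ y ⟶ y))
      = ρh x ≫ L.map f' ≫ ρi y
  rw [L.map_comp, L.map_comp, L.map_comp, hLs, hLt, hρh, hρi]
end

section
/- Let M be a model category and consider objects and morphisms f₀ : B → A₀, f₁ : B → A₁, g : B → C, g₀ : A₀ → D₀, g₁ : A₁ → D₁, f′₀ : C → D₀, f′₁ : C → D₁. Assume that g₀ ∘ f₀ is left homotopic to f′₀ ∘ g and that g₁ ∘ f₁ is left homotopic to f′₁ ∘ g, that B is cofibrant, and that the induced map (f′₀, f′₁) : C → D₀ × D₁ into the product is a fibration. Then there exists a map ḡ : B → C which is left homotopic to g and satisfies f′₀ ∘ ḡ = g₀ ∘ f₀ and f′₁ ∘ ḡ = g₁ ∘ f₁. -/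
open CategoryTheory Limits

universe v u

variable {C : Type u} [Category.{v} C]

section AuxForStatement7
set_option linter.unusedSectionVars false

variable {E : Type u} [Category.{v} E] [HasBinaryCoproducts E] [HasInitial E]

/-- Any map out of a cofibrant object lifts through a trivial fibration. -/
lemma ModelStructure.point_lift (MS : ModelStructure E) {B Z Y : E}
    (hB : MS.Cofibrant B) {t : Z ⟶ Y} (htf : MS.Fib t) (htw : MS.W t) (y : B ⟶ Y) :
    ∃ w : B ⟶ Z, w ≫ t = y := by
  haveI := MS.lift_cof_trivFib (initial.to B) t hB htf htw
  have sq : CommSq (initial.to Z) (initial.to B) t y := ⟨initial.hom_ext _ _⟩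
  exact ⟨sq.lift, sq.fac_right⟩

/-- The end inclusion `i₁` of a cylinder object on a cofibrant object is a cofibration. -/
lemma ModelStructure.cyl_i₁_cof (MS : ModelStructure E) {B : E}
    (hB : MS.Cofibrant B) (cyl : CylObj MS B) : MS.Cof cyl.i₁ := by
  obtain ⟨Z, c, t, hc, htf, htw, hfac⟩ := MS.factor_cof_trivFib cyl.i₁
  obtain ⟨w, hw⟩ := MS.point_lift hB htf htw cyl.i₀
  haveI := MS.lift_cof_trivFib (coprod.desc cyl.i₀ cyl.i₁) t cyl.cof htf htw
  have sq : CommSq (coprod.desc w c) (coprod.desc cyl.i₀ cyl.i₁) t (𝟙 cyl.I) := by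
    constructor
    apply coprod.hom_ext
    · simpa [coprod.inl_desc] using hw
    · simpa [coprod.inr_desc] using hfac
  have h1 : cyl.i₁ ≫ sq.lift = c := by
    calc cyl.i₁ ≫ sq.lift
        = (coprod.inr ≫ coprod.desc cyl.i₀ cyl.i₁) ≫ sq.lift := by rw [coprod.inr_desc]
      _ = coprod.inr ≫ coprod.desc cyl.i₀ cyl.i₁ ≫ sq.lift := by rw [Category.assoc]
      _ = coprod.inr ≫ coprod.desc w c := by rw [sq.fac_left]
      _ = c := by rw [coprod.inr_desc]
  refine MS.cof_retract cyl.i₁ c ⟨𝟙 B, 𝟙 B, sq.lift, t, by simp, sq.fac_right, ?_, ?_⟩ hc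
  · simpa using h1
  · simpa using hfac.symm

/-- The end inclusion `i₁` of a cylinder object is a weak equivalence. -/
lemma ModelStructure.cyl_i₁_w (MS : ModelStructure E) {B : E} (cyl : CylObj MS B) :
    MS.W cyl.i₁ :=
  MS.w_cancel_right cyl.i₁ cyl.π cyl.we (by rw [cyl.h₁]; exact MS.w_id B)

end AuxForStatement7

/-- a map homotopy-commuting with two maps into the legs of a fibration
`C → D₀ × D₁` can be replaced, up to left homotopy, by one strictly commuting. -/
theorem homotopic_to_strictly_commuting
    {E : Type u} [Category.{v} E] [HasBinaryCoproducts E] [HasBinaryProducts E]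
    [HasInitial E] (MS : ModelStructure E)
    {B A₀ A₁ C D₀ D₁ : E}
    (f₀ : B ⟶ A₀) (f₁ : B ⟶ A₁) (g : B ⟶ C)
    (g₀ : A₀ ⟶ D₀) (g₁ : A₁ ⟶ D₁) (f'₀ : C ⟶ D₀) (f'₁ : C ⟶ D₁)
    (h₀ : LeftHomotopic MS (f₀ ≫ g₀) (g ≫ f'₀))
    (h₁ : LeftHomotopic MS (f₁ ≫ g₁) (g ≫ f'₁))
    (hB : MS.Cofibrant B)
    (hfib : MS.Fib (prod.lift f'₀ f'₁)) :
    ∃ gbar : B ⟶ C, LeftHomotopic MS gbar g ∧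
      gbar ≫ f'₀ = f₀ ≫ g₀ ∧ gbar ≫ f'₁ = f₁ ≫ g₁ := by
  obtain ⟨cyl₀, H₀, hH₀₀, hH₀₁⟩ := h₀
  obtain ⟨cyl₁, H₁, hH₁₀, hH₁₁⟩ := h₁
  -- end inclusions are trivial cofibrations
  have hc₀ : MS.Cof cyl₀.i₁ := MS.cyl_i₁_cof hB cyl₀
  have hw₀ : MS.W cyl₀.i₁ := MS.cyl_i₁_w cyl₀
  have hc₁ : MS.Cof cyl₁.i₁ := MS.cyl_i₁_cof hB cyl₁
  have hw₁ : MS.W cyl₁.i₁ := MS.cyl_i₁_w cyl₁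
  -- reassociated section identities
  have r₀₀ : ∀ {X : E} (x : B ⟶ X), cyl₀.i₀ ≫ cyl₀.π ≫ x = x := fun x => by
    rw [← Category.assoc, cyl₀.h₀, Category.id_comp]
  have r₀₁ : ∀ {X : E} (x : B ⟶ X), cyl₀.i₁ ≫ cyl₀.π ≫ x = x := fun x => by
    rw [← Category.assoc, cyl₀.h₁, Category.id_comp]
  have r₁₀ : ∀ {X : E} (x : B ⟶ X), cyl₁.i₀ ≫ cyl₁.π ≫ x = x := fun x => by
    rw [← Category.assoc, cyl₁.h₀, Category.id_comp]
  have r₁₁ : ∀ {X : E} (x : B ⟶ X), cyl₁.i₁ ≫ cyl₁.π ≫ x = x := fun x => by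
    rw [← Category.assoc, cyl₁.h₁, Category.id_comp]
  -- projection extraction for the fibration p = ⟨f'₀, f'₁⟩
  have proj : ∀ {X : E} (M : X ⟶ C) (u : X ⟶ D₀) (v : X ⟶ D₁),
      M ≫ prod.lift f'₀ f'₁ = prod.lift u v → M ≫ f'₀ = u ∧ M ≫ f'₁ = v := by
    intro X M u v h
    constructor
    · have := congrArg (fun z => z ≫ prod.fst) h
      simpa [prod.lift_fst] using this
    · have := congrArg (fun z => z ≫ prod.snd) h
      simpa [prod.lift_snd] using this
  -- STEP A : correct coordinate 1, lifting over cyl₁ with top g.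
  haveI := MS.lift_trivCof_fib cyl₁.i₁ (prod.lift f'₀ f'₁) hc₁ hw₁ hfib
  have sqA : CommSq g cyl₁.i₁ (prod.lift f'₀ f'₁)
      (prod.lift (cyl₁.π ≫ g ≫ f'₀) H₁) := by
    constructor
    rw [prod.comp_lift, prod.comp_lift, r₁₁, hH₁₁]
  set Lt : cyl₁.I ⟶ C := sqA.lift with hLt
  have hLtg : cyl₁.i₁ ≫ Lt = g := sqA.fac_left
  obtain ⟨hLt₀, hLt₁⟩ := proj Lt _ _ sqA.fac_right
  set gt : B ⟶ C := cyl₁.i₀ ≫ Lt with hgt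
  have hgt₀ : gt ≫ f'₀ = g ≫ f'₀ := by
    rw [hgt, Category.assoc, hLt₀, r₁₀]
  have hgt₁ : gt ≫ f'₁ = f₁ ≫ g₁ := by
    rw [hgt, Category.assoc, hLt₁, hH₁₀]
  -- STEP B : correct coordinate 0, lifting over cyl₀ with top gt.
  haveI := MS.lift_trivCof_fib cyl₀.i₁ (prod.lift f'₀ f'₁) hc₀ hw₀ hfib
  have sqB : CommSq gt cyl₀.i₁ (prod.lift f'₀ f'₁)
      (prod.lift H₀ (cyl₀.π ≫ f₁ ≫ g₁)) := by
    constructor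
    rw [prod.comp_lift, prod.comp_lift, r₀₁, hH₀₁, hgt₀, hgt₁]
  set Lb : cyl₀.I ⟶ C := sqB.lift with hLb
  have hLbg : cyl₀.i₁ ≫ Lb = gt := sqB.fac_left
  obtain ⟨hLb₀, hLb₁⟩ := proj Lb _ _ sqB.fac_right
  set gbar : B ⟶ C := cyl₀.i₀ ≫ Lb with hgbar
  have strict₀ : gbar ≫ f'₀ = f₀ ≫ g₀ := by
    rw [hgbar, Category.assoc, hLb₀, hH₀₀]
  have strict₁ : gbar ≫ f'₁ = f₁ ≫ g₁ := by
    rw [hgbar, Category.assoc, hLb₁, r₀₀]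
  -- The mapping path space of g : factor ⟨g, 𝟙⟩ : B ⟶ C ⨯ B.
  obtain ⟨P, j, q, hjc, hjw, hqf, hjq⟩ := MS.factor_trivCof_fib (prod.lift g (𝟙 B))
  -- projections through q
  have projq : ∀ {X : E} (M : X ⟶ P) (u : X ⟶ C) (v : X ⟶ B),
      M ≫ q = prod.lift u v → M ≫ q ≫ prod.fst = u ∧ M ≫ q ≫ prod.snd = v := by
    intro X M u v h
    constructor
    · rw [← Category.assoc, h, prod.lift_fst]
    · rw [← Category.assoc, h, prod.lift_snd]
  -- STEP C : push the homotopy Lt into P, attached at j.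
  haveI := MS.lift_trivCof_fib cyl₁.i₁ q hc₁ hw₁ hqf
  have sqC : CommSq j cyl₁.i₁ q (prod.lift Lt cyl₁.π) := by
    constructor
    rw [hjq, prod.comp_lift, hLtg, cyl₁.h₁]
  set Φ₁ : cyl₁.I ⟶ P := sqC.lift with hΦ₁
  set emid : B ⟶ P := cyl₁.i₀ ≫ Φ₁ with hemid
  have hemidq : emid ≫ q = prod.lift gt (𝟙 B) := by
    rw [hemid, Category.assoc, sqC.fac_right, prod.comp_lift, cyl₁.h₀, hgt]
  -- STEP D : push the homotopy Lb into P, attached at emid.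
  haveI := MS.lift_trivCof_fib cyl₀.i₁ q hc₀ hw₀ hqf
  have sqD : CommSq emid cyl₀.i₁ q (prod.lift Lb cyl₀.π) := by
    constructor
    rw [hemidq, prod.comp_lift, hLbg, cyl₀.h₁]
  set Φ₀ : cyl₀.I ⟶ P := sqD.lift with hΦ₀
  set etop : B ⟶ P := cyl₀.i₀ ≫ Φ₀ with hetop
  have hetopq : etop ≫ q = prod.lift gbar (𝟙 B) := by
    rw [hetop, Category.assoc, sqD.fac_right, prod.comp_lift, cyl₀.h₀, hgbar]
  -- Final cylinder : factor ⟨etop, j⟩ : B ⊔ B ⟶ P.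
  obtain ⟨J, c, t, hcc, htf, htw, hct⟩ := MS.factor_cof_trivFib (coprod.desc etop j)
  have hct' : ∀ {X : E} (x : P ⟶ X), c ≫ t ≫ x = coprod.desc etop j ≫ x := fun x => by
    rw [← Category.assoc, hct]
  have hwqs : MS.W (q ≫ prod.snd) := by
    apply MS.w_cancel_left j (q ≫ prod.snd) hjw
    have : j ≫ q ≫ prod.snd = 𝟙 B := by
      rw [← Category.assoc, hjq, prod.lift_snd]
    rw [this]
    exact MS.w_id B
  have hend₀ : ∀ {X : E} (x : P ⟶ X), (coprod.inl ≫ c) ≫ t ≫ x = etop ≫ x := fun x => by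
    rw [Category.assoc, hct', ← Category.assoc, coprod.inl_desc]
  have hend₁ : ∀ {X : E} (x : P ⟶ X), (coprod.inr ≫ c) ≫ t ≫ x = j ≫ x := fun x => by
    rw [Category.assoc, hct', ← Category.assoc, coprod.inr_desc]
  refine ⟨gbar, ⟨⟨J, coprod.inl ≫ c, coprod.inr ≫ c, t ≫ q ≫ prod.snd, ?_, ?_, ?_, ?_⟩,
    t ≫ q ≫ prod.fst, ?_, ?_⟩, strict₀, strict₁⟩
  · have : coprod.desc (coprod.inl ≫ c) (coprod.inr ≫ c) = c := by
      apply coprod.hom_ext <;> simp [coprod.inl_desc, coprod.inr_desc]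
    rw [this]
    exact hcc
  · exact MS.w_comp t (q ≫ prod.snd) htw hwqs
  · rw [hend₀, ← Category.assoc, hetopq, prod.lift_snd]
  · rw [hend₁, ← Category.assoc, hjq, prod.lift_snd]
  · rw [hend₀, ← Category.assoc, hetopq, prod.lift_fst]
  · rw [hend₁, ← Category.assoc, hjq, prod.lift_fst]
end

section
/- Let M be a model category and let X and Y be objects that are both fibrant and cofibrant and are connected by a zigzag of weak equivalences. Then there exist a cofibrant object Z and weak equivalences α : Z → X and α′ : Z → Y such that the induced map (α, α′) : Z → X × Y into the product is a fibration. -/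
open CategoryTheory Limits

universe v u

variable {C : Type u} [Category.{v} C]

/-- A zigzag of weak equivalences between two objects. -/
def ZigzagWE {E : Type u} [Category.{v} E] (MS : ModelStructure E) : E → E → Prop :=
  Relation.ReflTransGen (fun A B => (∃ f : A ⟶ B, MS.W f) ∨ (∃ g : B ⟶ A, MS.W g))


/-- Cofibrations are closed under composition (retract argument). -/
lemma ModelStructure.cof_comp_s9 (MS : ModelStructure C) {X Y Z : C} (f : X ⟶ Y) (g : Y ⟶ Z)
    (hf : MS.Cof f) (hg : MS.Cof g) : MS.Cof (f ≫ g) := by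
  obtain ⟨W', i, p, hi, hp, hpw, hfac⟩ := MS.factor_cof_trivFib (f ≫ g)
  haveI := MS.lift_cof_trivFib f p hf hp hpw
  have sq1 : CommSq i f p g := ⟨by simpa using hfac⟩
  let l1 : Y ⟶ W' := sq1.lift
  haveI := MS.lift_cof_trivFib g p hg hp hpw
  have sq2 : CommSq l1 g p (𝟙 Z) := ⟨by simp [l1]⟩
  let l2 : Z ⟶ W' := sq2.lift
  apply MS.cof_retract (f ≫ g) i _ hi
  refine ⟨𝟙 X, 𝟙 X, l2, p, by simp, by simp [l2], ?_, by simpa using hfac.symm⟩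
  have h1 : g ≫ l2 = l1 := sq2.fac_left
  have h2 : f ≫ l1 = i := sq1.fac_left
  simp [Category.assoc, h1, h2]

/-- two fibrant-cofibrant objects connected by a zigzag of weak
equivalences can be connected by a span of weak equivalences from a cofibrant object
whose induced map to the product is a fibration. -/
theorem exists_span_of_zigzag
    {E : Type u} [Category.{v} E] [HasTerminal E] [HasInitial E] [HasBinaryProducts E]
    (MS : ModelStructure E) {X Y : E}
    (hXf : MS.Fibrant X) (hXc : MS.Cofibrant X)
    (hYf : MS.Fibrant Y) (hYc : MS.Cofibrant Y)
    (hzz : ZigzagWE MS X Y) :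
    ∃ (Z : E) (α : Z ⟶ X) (α' : Z ⟶ Y),
      MS.Cofibrant Z ∧ MS.W α ∧ MS.W α' ∧ MS.Fib (prod.lift α α') := by
  -- Invariant: a cofibrant object with weak equivalences to `X` and to the current object.
  have key : ∀ A : E, ZigzagWE MS X A →
      ∃ (Z : E) (α : Z ⟶ X) (β : Z ⟶ A), MS.Cofibrant Z ∧ MS.W α ∧ MS.W β := by
    intro A hA
    induction hA with
    | refl => exact ⟨X, 𝟙 X, 𝟙 X, hXc, MS.w_id X, MS.w_id X⟩
    | @tail b c _ e ih =>
      obtain ⟨Z, α, β, hZc, hα, hβ⟩ := ih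
      rcases e with ⟨f, hf⟩ | ⟨g, hg⟩
      · exact ⟨Z, α, β ≫ f, hZc, hα, MS.w_comp β f hβ hf⟩
      · -- g : c ⟶ b is a weak equivalence; build a cofibrant replacement of c.
        obtain ⟨Qc, iq, pq, hiq, hpq, hpqw, hqfac⟩ := MS.factor_cof_trivFib (initial.to c)
        have hQc : MS.Cofibrant Qc := by
          have : initial.to Qc = iq := initial.hom_ext _ _
          rw [ModelStructure.Cofibrant, this]; exact hiq
        -- factor β : Z ⟶ b as trivial cofibration i' followed by (trivial) fibration q'
        obtain ⟨Z', i', q', hi'c, hi'w, hq'f, hq'fac⟩ := MS.factor_trivCof_fib β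
        have hq'w : MS.W q' := MS.w_cancel_left i' q' hi'w (by rw [hq'fac]; exact hβ)
        have hZ'c : MS.Cofibrant Z' := by
          have : initial.to Z' = initial.to Z ≫ i' := initial.hom_ext _ _
          rw [ModelStructure.Cofibrant, this]
          exact MS.cof_comp_s9 _ _ hZc hi'c
        -- lift (pq ≫ g) : Qc ⟶ b through the trivial fibration q'
        haveI := MS.lift_cof_trivFib (initial.to Qc) q' hQc hq'f hq'w
        have sqℓ : CommSq (initial.to Z') (initial.to Qc) q' (pq ≫ g) :=
          ⟨initial.hom_ext _ _⟩
        have hℓ : MS.W sqℓ.lift := by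
          apply MS.w_cancel_right sqℓ.lift q' hq'w
          rw [sqℓ.fac_right]
          exact MS.w_comp pq g hpqw hg
        -- extend α : Z ⟶ X along the trivial cofibration i', using fibrancy of X
        haveI := MS.lift_trivCof_fib i' (terminal.from X) hi'c hi'w hXf
        have sqlam : CommSq α i' (terminal.from X) (terminal.from Z') :=
          ⟨terminal.hom_ext _ _⟩
        have hlam : MS.W sqlam.lift :=
          MS.w_cancel_left i' sqlam.lift hi'w (by rw [sqlam.fac_left]; exact hα)
        exact ⟨Qc, sqℓ.lift ≫ sqlam.lift, pq, hQc,
          MS.w_comp _ _ hℓ hlam, hpqw⟩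
  obtain ⟨Z, α, β, hZc, hα, hβ⟩ := key Y hzz
  -- final step: factor the map to the product as trivial cofibration ≫ fibration
  obtain ⟨Z₁, i, p, hic, hiw, hpf, hfac⟩ := MS.factor_trivCof_fib (prod.lift α β)
  have hZ₁c : MS.Cofibrant Z₁ := by
    have : initial.to Z₁ = initial.to Z ≫ i := initial.hom_ext _ _
    rw [ModelStructure.Cofibrant, this]
    exact MS.cof_comp_s9 _ _ hZc hic
  refine ⟨Z₁, p ≫ prod.fst, p ≫ prod.snd, hZ₁c, ?_, ?_, ?_⟩
  · apply MS.w_cancel_left i _ hiw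
    have : i ≫ p ≫ prod.fst = α := by rw [← Category.assoc, hfac]; exact prod.lift_fst _ _
    rw [this]; exact hα
  · apply MS.w_cancel_left i _ hiw
    have : i ≫ p ≫ prod.snd = β := by rw [← Category.assoc, hfac]; exact prod.lift_snd _ _
    rw [this]; exact hβ
  · have : prod.lift (p ≫ prod.fst) (p ≫ prod.snd) = p := by
      apply Limits.prod.hom_ext
      · exact prod.lift_fst _ _
      · exact prod.lift_snd _ _
    rw [this]; exact hpf
end
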